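/- arXiv:2011.13674 — 16 statements merged into one kernel-verified Lean document; each statement's English description precedes it below -/
import Mathlib

section
/- Let A be a real n×n matrix and S a real m×n matrix such that S·Sᵀ is invertible (i.e. S has full row rank m), and suppose the kernel of S is invariant under A, i.e. for every y ∈ ℝⁿ with S·y = 0 one has S·A·y = 0. Let S† = Sᵀ·(S·Sᵀ)⁻¹ denote the Moore–Penrose right inverse of S. Then every complex root of the characteristic polynomial of the m×m matrix S·A·S† is a complex root of the characteristic polynomial of A. In particular, if A is Hurwitz then S·A·S† is Hurwitz. -/
open Matrix Polynomial

lemma vecMul_smul_one_aux {k : ℕ} (μ : ℂ) (v : Fin k → ℂ) :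
    v ᵥ* (μ • (1 : Matrix (Fin k) (Fin k) ℂ)) = μ • v := by
  ext j
  simp [Matrix.vecMul, dotProduct, Matrix.one_apply, mul_comm, Finset.sum_ite_eq]

lemma eval_charpoly_aux {k : ℕ} (M : Matrix (Fin k) (Fin k) ℂ) (μ : ℂ) :
    M.charpoly.eval μ = (μ • (1 : Matrix (Fin k) (Fin k) ℂ) - M).det := by
  rw [Matrix.charpoly, ← Polynomial.coe_evalRingHom, RingHom.map_det]
  congr 1
  ext i j
  by_cases h : i = j
  · subst h
    simp [charmatrix_apply_eq, Matrix.one_apply]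
  · simp [charmatrix_apply_ne _ _ _ h, Matrix.one_apply_ne h]

set_option maxHeartbeats 1000000 in
/-- If `ker S` is `A`-invariant and `S` has full row rank (so that `S·Sᵀ` is invertible),
then every complex root of the characteristic polynomial of `S·A·S†`, where
`S† = Sᵀ·(S·Sᵀ)⁻¹`, is a complex root of the characteristic polynomial of `A`.
In particular, if `A` is Hurwitz then so is `S·A·S†`. -/
theorem stmt1 {n m : ℕ}
    (A : Matrix (Fin n) (Fin n) ℝ) (S : Matrix (Fin m) (Fin n) ℝ)
    (hS : IsUnit (S * Sᵀ))
    (hinv : ∀ y : Fin n → ℝ, S.mulVec y = 0 → S.mulVec (A.mulVec y) = 0) :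
    (∀ μ : ℂ, ((S * A * (Sᵀ * (S * Sᵀ)⁻¹)).charpoly.map (algebraMap ℝ ℂ)).IsRoot μ →
        (A.charpoly.map (algebraMap ℝ ℂ)).IsRoot μ) ∧
    ((∀ μ : ℂ, (A.charpoly.map (algebraMap ℝ ℂ)).IsRoot μ → μ.re < 0) →
      ∀ μ : ℂ, ((S * A * (Sᵀ * (S * Sᵀ)⁻¹)).charpoly.map (algebraMap ℝ ℂ)).IsRoot μ →
        μ.re < 0) := by
  have key : ∀ μ : ℂ, ((S * A * (Sᵀ * (S * Sᵀ)⁻¹)).charpoly.map (algebraMap ℝ ℂ)).IsRoot μ →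
      (A.charpoly.map (algebraMap ℝ ℂ)).IsRoot μ := by
    intro μ hμ
    set B := S * A * (Sᵀ * (S * Sᵀ)⁻¹) with hB
    -- S * pseudoinverse = 1
    have hSdag : S * (Sᵀ * (S * Sᵀ)⁻¹) = 1 := by
      rw [← Matrix.mul_assoc]
      exact Matrix.mul_nonsing_inv _ ((Matrix.isUnit_iff_isUnit_det _).mp hS)
    -- S * A = B * S
    have hcol : ∀ y : Fin n → ℝ, (S * A).mulVec y = (B * S).mulVec y := by
      intro y
      have hz : S.mulVec (y - (Sᵀ * (S * Sᵀ)⁻¹).mulVec (S.mulVec y)) = 0 := by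
        rw [Matrix.mulVec_sub, Matrix.mulVec_mulVec, Matrix.mulVec_mulVec, hSdag,
          Matrix.one_mul, sub_self]
      have h2 := hinv _ hz
      rw [Matrix.mulVec_sub, Matrix.mulVec_sub, sub_eq_zero] at h2
      rw [hB]
      simp only [← Matrix.mulVec_mulVec] at h2 ⊢
      exact h2
    have hSA : S * A = B * S := by
      have ht : (S * A)ᵀ = (B * S)ᵀ := by
        ext j i
        have := congrFun (hcol (Pi.single j 1)) i
        simpa [Matrix.mulVec_single_one] using this
      simpa using congrArg Matrix.transpose ht
    -- complexify
    have hSA' : S.map (algebraMap ℝ ℂ) * A.map (algebraMap ℝ ℂ)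
        = B.map (algebraMap ℝ ℂ) * S.map (algebraMap ℝ ℂ) := by
      rw [← Matrix.map_mul, ← Matrix.map_mul, hSA]
    have hSSt : IsUnit (S.map (algebraMap ℝ ℂ) * (S.map (algebraMap ℝ ℂ))ᵀ) := by
      rw [← Matrix.transpose_map, ← Matrix.map_mul]
      exact hS.map (algebraMap ℝ ℂ).mapMatrix
    -- μ is a root of the charpoly of B over ℂ
    have hroot : (μ • (1 : Matrix (Fin m) (Fin m) ℂ) - B.map (algebraMap ℝ ℂ)).det = 0 := by
      have h := hμ
      rw [← Matrix.charpoly_map B (algebraMap ℝ ℂ), Polynomial.IsRoot,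
        eval_charpoly_aux] at h
      exact h
    obtain ⟨v, hv0, hv⟩ := Matrix.exists_vecMul_eq_zero_iff.mpr hroot
    have hvB : v ᵥ* B.map (algebraMap ℝ ℂ) = μ • v := by
      rw [Matrix.vecMul_sub, sub_eq_zero] at hv
      rw [← hv, vecMul_smul_one_aux]
    set w := v ᵥ* S.map (algebraMap ℝ ℂ) with hw
    have hw0 : w ≠ 0 := by
      intro hw0
      apply hv0
      have h1 : v ᵥ* (S.map (algebraMap ℝ ℂ) * (S.map (algebraMap ℝ ℂ))ᵀ) = 0 := by
        rw [← Matrix.vecMul_vecMul, ← hw, hw0, Matrix.zero_vecMul]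
      have hinv1 : (S.map (algebraMap ℝ ℂ) * (S.map (algebraMap ℝ ℂ))ᵀ) *
          (S.map (algebraMap ℝ ℂ) * (S.map (algebraMap ℝ ℂ))ᵀ)⁻¹ = 1 :=
        Matrix.mul_nonsing_inv _ ((Matrix.isUnit_iff_isUnit_det _).mp hSSt)
      have h3 : v ᵥ* ((S.map (algebraMap ℝ ℂ) * (S.map (algebraMap ℝ ℂ))ᵀ) *
          (S.map (algebraMap ℝ ℂ) * (S.map (algebraMap ℝ ℂ))ᵀ)⁻¹) = 0 := by
        rw [← Matrix.vecMul_vecMul, h1, Matrix.zero_vecMul]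
      rwa [hinv1, Matrix.vecMul_one] at h3
    have hwA : w ᵥ* A.map (algebraMap ℝ ℂ) = μ • w := by
      rw [hw, Matrix.vecMul_vecMul, hSA', ← Matrix.vecMul_vecMul, hvB, Matrix.smul_vecMul]
    have hdet : (μ • (1 : Matrix (Fin n) (Fin n) ℂ) - A.map (algebraMap ℝ ℂ)).det = 0 := by
      rw [← Matrix.exists_vecMul_eq_zero_iff]
      exact ⟨w, hw0, by rw [Matrix.vecMul_sub, hwA, vecMul_smul_one_aux, sub_self]⟩
    rw [← Matrix.charpoly_map A (algebraMap ℝ ℂ), Polynomial.IsRoot, eval_charpoly_aux]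
    exact hdet
  exact ⟨key, fun hH μ hμ => hH μ (key μ hμ)⟩
end

section
/- Let A, B, K, S be real matrices of sizes n×n, n×m, m×n, m×n with A_cl = A + B·K, such that S·Sᵀ is invertible, S·B is invertible, and for every y ∈ ℝⁿ with S·y = 0 one has S·A_cl·y = 0. Let S† = Sᵀ·(S·Sᵀ)⁻¹. Let v, Δ : ℝ → ℝᵐ be functions and let y : ℝ → ℝⁿ be such that at every time t, y has derivative A·y(t) + B·(K·y(t) + (S·B)⁻¹·v(t) + Δ(t)). Then the function σ(t) := S·y(t) satisfies, at every t, the derivative identity σ′(t) = (S·A_cl·S†)·σ(t) + v(t) + S·B·Δ(t). -/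
open Matrix

/-- The σ-dynamics outside the sliding manifold: if `ẏ = A·y + B·(K·y + (S·B)⁻¹·v + Δ)`,
`S·Sᵀ` and `S·B` are invertible and `ker S` is invariant under `A_cl = A + B·K`, then
`σ = S·y` satisfies `σ′ = (S·A_cl·S†)·σ + v + S·B·Δ`, where `S† = Sᵀ·(S·Sᵀ)⁻¹`. -/
theorem stmt2 {n m : ℕ}
    (A : Matrix (Fin n) (Fin n) ℝ) (B : Matrix (Fin n) (Fin m) ℝ)
    (K S : Matrix (Fin m) (Fin n) ℝ)
    (hS : IsUnit (S * Sᵀ)) (hSB : IsUnit (S * B))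
    (hinv : ∀ y : Fin n → ℝ, S.mulVec y = 0 → S.mulVec ((A + B * K).mulVec y) = 0)
    (v Δ : ℝ → Fin m → ℝ) (y : ℝ → Fin n → ℝ)
    (hy : ∀ t, HasDerivAt y
      (A.mulVec (y t) + B.mulVec (K.mulVec (y t) + (S * B)⁻¹.mulVec (v t) + Δ t)) t) :
    ∀ t, HasDerivAt (fun τ => S.mulVec (y τ))
      ((S * (A + B * K) * (Sᵀ * (S * Sᵀ)⁻¹)).mulVec (S.mulVec (y t))
        + v t + (S * B).mulVec (Δ t)) t := by
  intro t
  set Acl := A + B * K with hAcl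
  set Sd := Sᵀ * (S * Sᵀ)⁻¹ with hSd
  have hSSd : S * Sd = 1 := by
    rw [hSd, ← Matrix.mul_assoc, Matrix.mul_nonsing_inv _ ((Matrix.isUnit_iff_isUnit_det _).mp hS)]
  have hkey : ∀ x : Fin n → ℝ, S.mulVec (Acl.mulVec x)
      = (S * Acl * Sd).mulVec (S.mulVec x) := by
    intro x
    have hz : S.mulVec (x - Sd.mulVec (S.mulVec x)) = 0 := by
      rw [Matrix.mulVec_sub, Matrix.mulVec_mulVec, hSSd, Matrix.one_mulVec, sub_self]
    have h0 := hinv _ hz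
    simp only [Matrix.mulVec_sub] at h0
    have h2 := sub_eq_zero.mp h0
    rw [h2]
    simp [Matrix.mulVec_mulVec, Matrix.mul_assoc]
  have hlin := (Matrix.mulVecLin S).toContinuousLinearMap.hasFDerivAt (x := y t)
  have hderiv := hlin.comp_hasDerivAt t (hy t)
  have hthis : HasDerivAt (fun τ => S.mulVec (y τ))
      (S.mulVec (A.mulVec (y t) + B.mulVec (K.mulVec (y t) + (S * B)⁻¹.mulVec (v t) + Δ t))) t := by
    simpa [Function.comp_def] using hderiv
  convert hthis using 1
  have hSBinv : S * B * (S * B)⁻¹ = 1 :=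
    Matrix.mul_nonsing_inv _ ((Matrix.isUnit_iff_isUnit_det _).mp hSB)
  rw [← hkey, hAcl]
  simp only [Matrix.mulVec_add, Matrix.add_mulVec, Matrix.mulVec_mulVec, Matrix.mul_assoc]
  rw [show B * (S * B)⁻¹ = B * (S * B)⁻¹ from rfl]
  have hv : (S * (B * (S * B)⁻¹)).mulVec (v t) = v t := by
    rw [← Matrix.mul_assoc, hSBinv, Matrix.one_mulVec]
  rw [hv]
  have hd : (S * B).mulVec (Δ t) = S.mulVec (B.mulVec (Δ t)) := by
    rw [Matrix.mulVec_mulVec]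
  rw [hd]
  simp [Matrix.mulVec_add, Matrix.mulVec_mulVec, Matrix.mul_assoc]
  abel
end

section
/- Let α > 0 and β > 0, and let V : ℝ → ℝ be a differentiable function such that V(t) ≥ 0 for all t ≥ 0 and V′(t) ≤ −α·V(t) − β·√(V(t)) for all t ≥ 0. Then V(t) = 0 for every t ≥ t_s, where t_s = (2/α)·ln((α/β)·√(V(0)) + 1). -/
/-- Finite settling time: if `V ≥ 0` and `V′ ≤ −α·V − β·√V` on `[0, ∞)` with `α, β > 0`,
then `V(t) = 0` for all `t ≥ t_s = (2/α)·ln((α/β)·√(V 0) + 1)`. -/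
theorem stmt3 (α β : ℝ) (hα : 0 < α) (hβ : 0 < β) (V : ℝ → ℝ)
    (hV : Differentiable ℝ V)
    (hnonneg : ∀ t, 0 ≤ t → 0 ≤ V t)
    (hdecay : ∀ t, 0 ≤ t → deriv V t ≤ -α * V t - β * Real.sqrt (V t)) :
    ∀ t, (2 / α) * Real.log ((α / β) * Real.sqrt (V 0) + 1) ≤ t → V t = 0 := by
  set ts := (2 / α) * Real.log ((α / β) * Real.sqrt (V 0) + 1) with hts_def
  have harg1 : (1 : ℝ) ≤ (α / β) * Real.sqrt (V 0) + 1 := by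
    nlinarith [Real.sqrt_nonneg (V 0), div_pos hα hβ,
      mul_nonneg (div_pos hα hβ).le (Real.sqrt_nonneg (V 0))]
  have hts0 : 0 ≤ ts := by
    have hlog : 0 ≤ Real.log ((α / β) * Real.sqrt (V 0) + 1) := Real.log_nonneg harg1
    positivity
  -- V is antitone on [0, ∞)
  have hAntiV : AntitoneOn V (Set.Ici 0) := by
    apply antitoneOn_of_deriv_nonpos (convex_Ici 0) hV.continuous.continuousOn
      (hV.differentiableOn)
    intro x hx
    rw [interior_Ici] at hx
    have h1 := hdecay x hx.le
    have h2 := hnonneg x hx.le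
    nlinarith [mul_nonneg hα.le h2, mul_nonneg hβ.le (Real.sqrt_nonneg (V x))]
  intro t ht
  have ht0 : 0 ≤ t := le_trans hts0 ht
  by_cases h : ∃ s ∈ Set.Icc (0:ℝ) ts, V s = 0
  · obtain ⟨s, hs, hVs⟩ := h
    have hle : V t ≤ V s := hAntiV hs.1 (Set.mem_Ici.mpr ht0) (le_trans hs.2 ht)
    have := hnonneg t ht0
    linarith [hle, hVs ▸ hle]
  · push_neg at h
    exfalso
    have hpos : ∀ s ∈ Set.Icc (0:ℝ) ts, 0 < V s := fun s hs =>
      lt_of_le_of_ne (hnonneg s hs.1) (Ne.symm (h s hs))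
    set g : ℝ → ℝ := fun s => Real.exp (α / 2 * s) * (Real.sqrt (V s) + β / α) with hg_def
    have hAntig : AntitoneOn g (Set.Icc 0 ts) := by
      apply antitoneOn_of_deriv_nonpos (convex_Icc 0 ts)
      · exact ((Real.continuous_exp.comp (continuous_const.mul continuous_id)).mul
          ((Real.continuous_sqrt.comp hV.continuous).add continuous_const)).continuousOn
      · intro x hx
        rw [interior_Icc] at hx
        have hVx : 0 < V x := hpos x ⟨hx.1.le, hx.2.le⟩
        have h1 : HasDerivAt (fun s : ℝ => α / 2 * s) (α / 2) x := by
          simpa using (hasDerivAt_id x).const_mul (α / 2)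
        have h2 := h1.exp
        have hV' : HasDerivAt V (deriv V x) x := (hV x).hasDerivAt
        have hsq : HasDerivAt Real.sqrt (1 / (2 * Real.sqrt (V x))) (V x) :=
          Real.hasDerivAt_sqrt hVx.ne'
        have hu : HasDerivAt (fun s => Real.sqrt (V s) + β / α)
            (1 / (2 * Real.sqrt (V x)) * deriv V x) x := (hsq.comp x hV').add_const _
        exact (h2.mul hu).differentiableAt.differentiableWithinAt
      · intro x hx
        rw [interior_Icc] at hx
        have hVx : 0 < V x := hpos x ⟨hx.1.le, hx.2.le⟩
        have hBx : 0 < Real.sqrt (V x) := Real.sqrt_pos.mpr hVx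
        have h1 : HasDerivAt (fun s : ℝ => α / 2 * s) (α / 2) x := by
          simpa using (hasDerivAt_id x).const_mul (α / 2)
        have h2 := h1.exp
        have hV' : HasDerivAt V (deriv V x) x := (hV x).hasDerivAt
        have hsq : HasDerivAt Real.sqrt (1 / (2 * Real.sqrt (V x))) (V x) :=
          Real.hasDerivAt_sqrt hVx.ne'
        have hu : HasDerivAt (fun s => Real.sqrt (V s) + β / α)
            (1 / (2 * Real.sqrt (V x)) * deriv V x) x := (hsq.comp x hV').add_const _
        have hg' := h2.mul hu
        rw [show deriv g x = _ from hg'.deriv]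
        have hsq2 : Real.sqrt (V x) ^ 2 = V x := Real.sq_sqrt hVx.le
        have hDle := hdecay x hx.1.le
        have hinner : α / 2 * (Real.sqrt (V x) + β / α) +
            1 / (2 * Real.sqrt (V x)) * deriv V x ≤ 0 := by
          have hc : α / 2 * (β / α) = β / 2 := by field_simp
          have hdiv : 1 / (2 * Real.sqrt (V x)) * deriv V x ≤
              -(α / 2) * Real.sqrt (V x) - β / 2 := by
            rw [one_div, inv_mul_le_iff₀ (by positivity)]
            nlinarith
          nlinarith
        have hE : 0 < Real.exp (α / 2 * x) := Real.exp_pos _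
        calc Real.exp (α / 2 * x) * (α / 2) * (Real.sqrt (V x) + β / α) +
              Real.exp (α / 2 * x) * (1 / (2 * Real.sqrt (V x)) * deriv V x)
            = Real.exp (α / 2 * x) * (α / 2 * (Real.sqrt (V x) + β / α) +
              1 / (2 * Real.sqrt (V x)) * deriv V x) := by ring
          _ ≤ 0 := mul_nonpos_of_nonneg_of_nonpos hE.le hinner
    have hgle : g ts ≤ g 0 :=
      hAntig (Set.left_mem_Icc.mpr hts0) (Set.right_mem_Icc.mpr hts0) hts0
    have hexp_ts : Real.exp (α / 2 * ts) = (α / β) * Real.sqrt (V 0) + 1 := by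
      rw [hts_def]
      rw [show α / 2 * ((2 / α) * Real.log ((α / β) * Real.sqrt (V 0) + 1))
          = Real.log ((α / β) * Real.sqrt (V 0) + 1) by field_simp]
      exact Real.exp_log (lt_of_lt_of_le one_pos harg1)
    simp only [hg_def, mul_zero, Real.exp_zero, one_mul, hexp_ts] at hgle
    have hA : 0 ≤ Real.sqrt (V 0) := Real.sqrt_nonneg _
    have hB : 0 < Real.sqrt (V ts) :=
      Real.sqrt_pos.mpr (hpos ts (Set.right_mem_Icc.mpr hts0))
    have hc1 : (α / β) * (β / α) = 1 := by field_simp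
    have key : (α / β) * Real.sqrt (V 0) * (β / α) = Real.sqrt (V 0) := by field_simp
    nlinarith [key, hB, mul_nonneg (mul_nonneg (div_pos hα hβ).le hA) hB.le]
end

section
/- Let A be a real m×m matrix, and let P and Q be real symmetric m×m matrices satisfying the Lyapunov equation Aᵀ·P + P·A = −Q. Assume there are constants 0 < p₁ ≤ p₂ and q₁ > 0 such that p₁·‖x‖² ≤ xᵀ·P·x ≤ p₂·‖x‖² and q₁·‖x‖² ≤ xᵀ·Q·x for all x ∈ ℝᵐ (Euclidean norm). Let D ≥ 0, μ⋆ > 0 and μ ≥ (1/p₁)·(μ⋆/2 + p₂·D). Let σ : ℝ → ℝᵐ and d : ℝ → ℝᵐ with ‖d(t)‖ ≤ D for all t. If at a time t one has σ(t) ≠ 0 and σ has derivative A·σ(t) − μ·σ(t)/‖σ(t)‖ + d(t) at t, then the function V(t) := σ(t)ᵀ·P·σ(t) is differentiable at t with V′(t) ≤ −(q₁/p₂)·V(t) − (μ⋆/√p₂)·√(V(t)). -/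
open Matrix

/-- The Euclidean norm on `Fin m → ℝ`. -/
noncomputable def euclNorm {m : ℕ} (x : Fin m → ℝ) : ℝ := Real.sqrt (∑ i, x i ^ 2)

lemma euclNorm_nonneg {m : ℕ} (x : Fin m → ℝ) : 0 ≤ euclNorm x := Real.sqrt_nonneg _

lemma euclNorm_sq {m : ℕ} (x : Fin m → ℝ) : euclNorm x ^ 2 = ∑ i, x i ^ 2 :=
  Real.sq_sqrt (Finset.sum_nonneg fun i _ => sq_nonneg _)

lemma symm_dot {m : ℕ} {P : Matrix (Fin m) (Fin m) ℝ} (hP : P.IsSymm)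
    (x y : Fin m → ℝ) : x ⬝ᵥ P.mulVec y = y ⬝ᵥ P.mulVec x := by
  rw [Matrix.dotProduct_mulVec]
  conv_lhs => rw [← hP]
  rw [Matrix.vecMul_transpose, dotProduct_comm]

lemma cs_bound {m : ℕ} {P : Matrix (Fin m) (Fin m) ℝ} (hP : P.IsSymm)
    {p₁ p₂ : ℝ} (hp₁ : 0 < p₁) (hp₂ : 0 ≤ p₂)
    (hPlow : ∀ x : Fin m → ℝ, p₁ * euclNorm x ^ 2 ≤ x ⬝ᵥ P.mulVec x)
    (hPhigh : ∀ x : Fin m → ℝ, x ⬝ᵥ P.mulVec x ≤ p₂ * euclNorm x ^ 2)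
    (x y : Fin m → ℝ) : x ⬝ᵥ P.mulVec y ≤ p₂ * euclNorm x * euclNorm y := by
  rcases eq_or_ne y 0 with rfl | hy
  · simp [Matrix.mulVec_zero, euclNorm]
  · set a := x ⬝ᵥ P.mulVec x with ha
    set b := x ⬝ᵥ P.mulVec y with hb
    set c := y ⬝ᵥ P.mulVec y with hc
    have hcpos : 0 < c := by
      have h1 : 0 < euclNorm y ^ 2 := by
        rw [euclNorm_sq]
        obtain ⟨i, hi⟩ := Function.ne_iff.mp hy
        exact Finset.sum_pos' (fun i _ => sq_nonneg _)
          ⟨i, Finset.mem_univ i, sq_pos_of_ne_zero hi⟩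
      nlinarith [hPlow y]
    have hanneg : 0 ≤ a := le_trans (by positivity) (hPlow x)
    have key : ∀ s : ℝ, 0 ≤ a - 2 * s * b + s ^ 2 * c := by
      intro s
      have h0 := hPlow (x - s • y)
      have hexp : (x - s • y) ⬝ᵥ P.mulVec (x - s • y) = a - 2 * s * b + s ^ 2 * c := by
        simp only [Matrix.mulVec_sub, Matrix.mulVec_smul, sub_dotProduct,
          dotProduct_sub, smul_dotProduct, dotProduct_smul,
          smul_eq_mul]
        rw [symm_dot hP y x]
        simp only [← ha, ← hb, ← hc]
        ring
      have h1 : (0:ℝ) ≤ euclNorm (x - s • y) ^ 2 := sq_nonneg _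
      nlinarith [h0, mul_nonneg hp₁.le h1]
    have hb2 : b ^ 2 ≤ a * c := by
      have h := key (b / c)
      have h2 : 0 ≤ (a - 2 * (b / c) * b + (b / c) ^ 2 * c) * c := mul_nonneg h hcpos.le
      have h3 : (a - 2 * (b / c) * b + (b / c) ^ 2 * c) * c = a * c - b ^ 2 := by
        field_simp
        ring
      nlinarith [h2, h3]
    have hax := hPhigh x
    have hcy := hPhigh y
    have hnx : 0 ≤ euclNorm x := euclNorm_nonneg x
    have hny : 0 ≤ euclNorm y := euclNorm_nonneg y
    nlinarith [sq_nonneg (p₂ * euclNorm x * euclNorm y - b),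
      sq_nonneg (p₂ * euclNorm x * euclNorm y + b),
      mul_nonneg (mul_nonneg hp₂ hnx) hny]

/-- Lyapunov decrease estimate for the unit-vector controller: with
`AᵀP + PA = −Q`, `p₁‖x‖² ≤ xᵀPx ≤ p₂‖x‖²`, `q₁‖x‖² ≤ xᵀQx`, `‖d(t)‖ ≤ D` and
`μ ≥ (1/p₁)(μ⋆/2 + p₂D)`, if at time `t` we have `σ(t) ≠ 0` and
`σ′(t) = A·σ(t) − μ·σ(t)/‖σ(t)‖ + d(t)`, then `V = σᵀPσ` is differentiable at `t`
with `V′(t) ≤ −(q₁/p₂)·V(t) − (μ⋆/√p₂)·√(V(t))`. -/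
theorem stmt4 {m : ℕ}
    (A P Q : Matrix (Fin m) (Fin m) ℝ)
    (hP : P.IsSymm) (hQ : Q.IsSymm)
    (hLyap : Aᵀ * P + P * A = -Q)
    (p₁ p₂ q₁ : ℝ) (hp₁ : 0 < p₁) (hp₁₂ : p₁ ≤ p₂) (hq₁ : 0 < q₁)
    (hPlow : ∀ x : Fin m → ℝ, p₁ * euclNorm x ^ 2 ≤ x ⬝ᵥ P.mulVec x)
    (hPhigh : ∀ x : Fin m → ℝ, x ⬝ᵥ P.mulVec x ≤ p₂ * euclNorm x ^ 2)
    (hQlow : ∀ x : Fin m → ℝ, q₁ * euclNorm x ^ 2 ≤ x ⬝ᵥ Q.mulVec x)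
    (D μstar μ : ℝ) (hD : 0 ≤ D) (hμstar : 0 < μstar)
    (hμ : (1 / p₁) * (μstar / 2 + p₂ * D) ≤ μ)
    (σ d : ℝ → Fin m → ℝ) (hd : ∀ t, euclNorm (d t) ≤ D)
    (t : ℝ) (hσt : σ t ≠ 0)
    (hderiv : HasDerivAt σ (A.mulVec (σ t) - (μ / euclNorm (σ t)) • σ t + d t) t) :
    ∃ V' : ℝ, HasDerivAt (fun τ => σ τ ⬝ᵥ P.mulVec (σ τ)) V' t ∧
      V' ≤ -(q₁ / p₂) * (σ t ⬝ᵥ P.mulVec (σ t))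
        - (μstar / Real.sqrt p₂) * Real.sqrt (σ t ⬝ᵥ P.mulVec (σ t)) := by
  have hp₂ : 0 < p₂ := lt_of_lt_of_le hp₁ hp₁₂
  set n : ℝ := euclNorm (σ t) with hn
  set v : Fin m → ℝ := A.mulVec (σ t) - (μ / n) • σ t + d t with hv
  -- positivity of n
  have hnpos : 0 < n := by
    rw [hn, euclNorm]
    apply Real.sqrt_pos.mpr
    obtain ⟨i, hi⟩ := Function.ne_iff.mp hσt
    exact Finset.sum_pos' (fun i _ => sq_nonneg _)
      ⟨i, Finset.mem_univ i, sq_pos_of_ne_zero hi⟩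
  have hn2 : n ^ 2 = ∑ i, σ t i ^ 2 := euclNorm_sq (σ t)
  -- componentwise derivative
  have hci : ∀ i, HasDerivAt (fun τ => σ τ i) (v i) t := fun i => hasDerivAt_pi.mp hderiv i
  -- derivative of V
  refine ⟨v ⬝ᵥ P.mulVec (σ t) + σ t ⬝ᵥ P.mulVec v, ?_, ?_⟩
  · have h1 : HasDerivAt (fun τ => ∑ i, ∑ j, σ τ i * (P i j * σ τ j))
        (∑ i, ∑ j, (v i * (P i j * σ t j) + σ t i * (P i j * v j))) t := by
      apply HasDerivAt.fun_sum; intro i _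
      apply HasDerivAt.fun_sum; intro j _
      exact (hci i).mul ((hci j).const_mul (P i j))
    have heq : (fun τ => σ τ ⬝ᵥ P.mulVec (σ τ))
        = fun τ => ∑ i, ∑ j, σ τ i * (P i j * σ τ j) := by
      funext τ
      simp [dotProduct, Matrix.mulVec, Finset.mul_sum]
    have heq2 : v ⬝ᵥ P.mulVec (σ t) + σ t ⬝ᵥ P.mulVec v
        = ∑ i, ∑ j, (v i * (P i j * σ t j) + σ t i * (P i j * v j)) := by
      simp [dotProduct, Matrix.mulVec, Finset.mul_sum, Finset.sum_add_distrib]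
    rw [heq, heq2]
    exact h1
  · -- the bound
    set V := σ t ⬝ᵥ P.mulVec (σ t) with hV
    have hsym : v ⬝ᵥ P.mulVec (σ t) = σ t ⬝ᵥ P.mulVec v := symm_dot hP v (σ t)
    -- expand σᵀPv
    have hexp : σ t ⬝ᵥ P.mulVec v
        = σ t ⬝ᵥ P.mulVec (A.mulVec (σ t)) - (μ / n) * V + σ t ⬝ᵥ P.mulVec (d t) := by
      rw [hv, Matrix.mulVec_add, Matrix.mulVec_sub, Matrix.mulVec_smul,
        dotProduct_add, dotProduct_sub, dotProduct_smul]
      simp [smul_eq_mul, hV]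
    -- Lyapunov identity: 2 σᵀP(Aσ) = -σᵀQσ
    have hLy : 2 * (σ t ⬝ᵥ P.mulVec (A.mulVec (σ t))) = -(σ t ⬝ᵥ Q.mulVec (σ t)) := by
      have h1 : σ t ⬝ᵥ (Aᵀ * P + P * A).mulVec (σ t) = σ t ⬝ᵥ (-Q).mulVec (σ t) := by
        rw [hLyap]
      rw [Matrix.add_mulVec, dotProduct_add, Matrix.neg_mulVec,
        dotProduct_neg] at h1
      have h2 : σ t ⬝ᵥ (Aᵀ * P).mulVec (σ t) = σ t ⬝ᵥ P.mulVec (A.mulVec (σ t)) := by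
        rw [← Matrix.mulVec_mulVec, Matrix.dotProduct_mulVec (σ t) Aᵀ,
          Matrix.vecMul_transpose, Matrix.dotProduct_mulVec,
          ← Matrix.dotProduct_mulVec, symm_dot hP]
      have h3 : σ t ⬝ᵥ (P * A).mulVec (σ t) = σ t ⬝ᵥ P.mulVec (A.mulVec (σ t)) := by
        rw [← Matrix.mulVec_mulVec]
      rw [h2, h3] at h1
      linarith
    -- bound on disturbance term
    have hdist : σ t ⬝ᵥ P.mulVec (d t) ≤ p₂ * n * D := by
      have := cs_bound hP hp₁ hp₂.le hPlow hPhigh (σ t) (d t)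
      have h2 : p₂ * n * euclNorm (d t) ≤ p₂ * n * D :=
        mul_le_mul_of_nonneg_left (hd t) (by positivity)
      exact this.trans h2
    have hQb : q₁ * n ^ 2 ≤ σ t ⬝ᵥ Q.mulVec (σ t) := hQlow (σ t)
    have hVlow : p₁ * n ^ 2 ≤ V := hPlow (σ t)
    have hVhigh : V ≤ p₂ * n ^ 2 := hPhigh (σ t)
    have hVpos : 0 < V := lt_of_lt_of_le (by positivity) hVlow
    -- total bound: V' = 2 σᵀPv ≤ -σᵀQσ - 2(μ/n)V + 2 p₂ n D
    have hμ' : μstar / 2 + p₂ * D ≤ μ * p₁ := by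
      rw [div_mul_eq_mul_div, one_mul, div_le_iff₀ hp₁] at hμ
      linarith
    have hstep : v ⬝ᵥ P.mulVec (σ t) + σ t ⬝ᵥ P.mulVec v
        ≤ -(q₁ * n ^ 2) - μstar * n := by
      rw [hsym, ← two_mul, hexp]
      have e1 : 2 * (σ t ⬝ᵥ P.mulVec (A.mulVec (σ t)) - μ / n * V + σ t ⬝ᵥ P.mulVec (d t))
          = 2 * (σ t ⬝ᵥ P.mulVec (A.mulVec (σ t))) - 2 * (μ / n) * V
            + 2 * (σ t ⬝ᵥ P.mulVec (d t)) := by ring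
      rw [e1, hLy]
      have hμpos : 0 ≤ μ := by nlinarith
      have hμn : 2 * (μ / n) * V ≥ 2 * (μ / n) * (p₁ * n ^ 2) := by
        apply mul_le_mul_of_nonneg_left hVlow
        have : 0 ≤ μ / n := div_nonneg hμpos hnpos.le
        linarith
      have e2 : 2 * (μ / n) * (p₁ * n ^ 2) = 2 * μ * p₁ * n := by
        field_simp
      nlinarith [hQb, hdist, hμ', hnpos]
    refine hstep.trans ?_
    -- final: -(q₁ n²) - μ⋆ n ≤ -(q₁/p₂) V - (μ⋆/√p₂) √V
    have h1 : -(q₁ / p₂) * V ≥ -(q₁ * n ^ 2) := by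
      rw [ge_iff_le, neg_mul, neg_le_neg_iff, div_mul_eq_mul_div, div_le_iff₀ hp₂]
      calc q₁ * V ≤ q₁ * (p₂ * n ^ 2) := mul_le_mul_of_nonneg_left hVhigh hq₁.le
        _ = q₁ * n ^ 2 * p₂ := by ring
    have h2 : -(μstar / Real.sqrt p₂) * Real.sqrt V ≥ -(μstar * n) := by
      rw [ge_iff_le, neg_mul, neg_le_neg_iff]
      have hs : Real.sqrt V ≤ Real.sqrt p₂ * n := by
        have : Real.sqrt V ≤ Real.sqrt (p₂ * n ^ 2) := Real.sqrt_le_sqrt hVhigh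
        rwa [Real.sqrt_mul hp₂.le, Real.sqrt_sq hnpos.le] at this
      have hsp : 0 < Real.sqrt p₂ := Real.sqrt_pos.mpr hp₂
      rw [div_mul_eq_mul_div, div_le_iff₀ hsp]
      calc μstar * Real.sqrt V ≤ μstar * (Real.sqrt p₂ * n) :=
            mul_le_mul_of_nonneg_left hs hμstar.le
        _ = μstar * n * Real.sqrt p₂ := by ring
    linarith
end

section
/- Let T > 0 and n = m + k. Let A : ℝ → (real n×n matrices) be continuous with A(t + T) = A(t) for all t. Let Ψ : ℝ → (real n×n matrices) satisfy Ψ(0) = I, Ψ(t) is invertible for each t, and at every t the derivative of Ψ equals A(t)·Ψ(t) (so Ψ is the state-transition matrix and Ψ(T) is the monodromy matrix). Let X₀ be a real n×k matrix of rank k, and let S : ℝ → (real m×n matrices) satisfy S(t + T) = S(t) for all t, rank S(t) = m for all t, and S(t)·Ψ(t)·X₀ = 0 for all t. Then there exists an invertible real k×k matrix N such that Ψ(T)·X₀ = X₀·N; that is, the column span of X₀ is an invariant subspace of the monodromy matrix Ψ(T). -/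
open Matrix

attribute [local instance] Matrix.normedAddCommGroup Matrix.normedSpace

/-- If the `T`-periodic full-row-rank matrix function `S(t)` annihilates `Ψ(t)·X₀`,
where `Ψ` is the state-transition matrix of a `T`-periodic linear system and `X₀`
has full column rank `k` (with `n = m + k`), then the column span of `X₀` is invariant
under the monodromy matrix `Ψ(T)`: `Ψ(T)·X₀ = X₀·N` for some invertible `N`. -/
theorem stmt5 {m k : ℕ} (T : ℝ) (hT : 0 < T)
    (A Ψ : ℝ → Matrix (Fin (m + k)) (Fin (m + k)) ℝ)
    (hAcont : Continuous A) (hAper : ∀ t, A (t + T) = A t)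
    (hΨ0 : Ψ 0 = 1) (hΨinv : ∀ t, IsUnit (Ψ t))
    (hΨ : ∀ t, HasDerivAt Ψ (A t * Ψ t) t)
    (X₀ : Matrix (Fin (m + k)) (Fin k) ℝ) (hX₀ : X₀.rank = k)
    (S : ℝ → Matrix (Fin m) (Fin (m + k)) ℝ)
    (hSper : ∀ t, S (t + T) = S t) (hSrank : ∀ t, (S t).rank = m)
    (hannih : ∀ t, S t * Ψ t * X₀ = 0) :
    ∃ N : Matrix (Fin k) (Fin k) ℝ, IsUnit N ∧ Ψ T * X₀ = X₀ * N := by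
  -- S 0 * X₀ = 0
  have hS0X : S 0 * X₀ = 0 := by
    have h := hannih 0; rw [hΨ0] at h; simpa using h
  have hST : S 0 * (Ψ T * X₀) = 0 := by
    have h0 := hSper 0
    rw [zero_add] at h0
    have h := hannih T
    rw [h0] at h
    rwa [Matrix.mul_assoc] at h
  -- kernel of S 0 has dimension k
  have hker : Module.finrank ℝ (LinearMap.ker (S 0).mulVecLin) = k := by
    have h1 := LinearMap.finrank_range_add_finrank_ker (S 0).mulVecLin
    have h2 : Module.finrank ℝ (LinearMap.range (S 0).mulVecLin) = m := hSrank 0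
    rw [h2, Module.finrank_pi, Fintype.card_fin] at h1
    omega
  -- range of X₀ = kernel of S 0
  have hle : LinearMap.range X₀.mulVecLin ≤ LinearMap.ker (S 0).mulVecLin := by
    rintro _ ⟨v, rfl⟩
    rw [LinearMap.mem_ker, ← LinearMap.comp_apply, ← mulVecLin_mul, hS0X]
    simp
  have heq : LinearMap.range X₀.mulVecLin = LinearMap.ker (S 0).mulVecLin := by
    refine Submodule.eq_of_le_of_finrank_le hle ?_
    rw [hker]
    exact hX₀.symm.le
  -- columns of Ψ T * X₀ lie in range of X₀
  have hmem : ∀ j, (Ψ T * X₀).mulVecLin (Pi.single j 1) ∈ LinearMap.range X₀.mulVecLin := by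
    intro j
    rw [heq, LinearMap.mem_ker, ← LinearMap.comp_apply, ← mulVecLin_mul, hST]
    simp
  choose c hc using fun j => hmem j
  refine ⟨Matrix.of (fun i j => c j i), ?_, ?_⟩
  · -- invertibility of N
    set N : Matrix (Fin k) (Fin k) ℝ := Matrix.of (fun i j => c j i) with hN
    have hXN : Ψ T * X₀ = X₀ * N := by
      ext i j
      have := congrFun (hc j) i
      simp only [mulVecLin_apply, mulVec_single, mul_one, MulOpposite.op_one, one_smul, Matrix.col_apply] at this
      rw [← this]
      simp [mulVec, dotProduct, mul_apply, hN]
    have hrk : N.rank = k := by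
      have h1 : (X₀ * N).rank = k := by
        rw [← hXN, rank_mul_eq_right_of_isUnit_det _ _ ((isUnit_iff_isUnit_det _).mp (hΨinv T)), hX₀]
      have h2 := rank_mul_le_right X₀ N
      have h3 : N.rank ≤ k := by simpa using N.rank_le_card_width
      omega
    rw [← mulVec_surjective_iff_isUnit]
    have : LinearMap.range N.mulVecLin = ⊤ := by
      apply Submodule.eq_top_of_finrank_eq
      have hd : Module.finrank ℝ (LinearMap.range N.mulVecLin) = N.rank := rfl
      rw [hd, hrk, Module.finrank_pi, Fintype.card_fin]
    intro v
    obtain ⟨w, hw⟩ := (LinearMap.range_eq_top.mp this) v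
    exact ⟨w, hw⟩
  · ext i j
    have := congrFun (hc j) i
    simp only [mulVecLin_apply, mulVec_single, mul_one, MulOpposite.op_one, one_smul, Matrix.col_apply] at this
    rw [← this]
    simp [mulVec, dotProduct, mul_apply]
end

section
/- Let A, B, K : ℝ → (real matrix-valued functions) of sizes n×n, n×m and m×n respectively, and set A_cl(t) = A(t) + B(t)·K(t). Let F be a real n×n matrix and L : ℝ → (real n×n matrices) take invertible values and satisfy, at every t, the derivative identity L′(t) = A_cl(t)·L(t) − L(t)·F. Let Ŝ be a real m×n matrix such that (i) for every z ∈ ℝⁿ with Ŝ·z = 0 one has Ŝ·F·z = 0, and (ii) the m×m matrix Ŝ·L(t)⁻¹·B(t) is invertible for every t. Suppose y : ℝ → ℝⁿ and w : ℝ → ℝᵐ are such that at every t, y has derivative A(t)·y(t) + B(t)·w(t), and Ŝ·L(t)⁻¹·y(t) = 0 for all t. Then w(t) = K(t)·y(t) for every t. (Thus, when confined to the sliding manifold defined by S(t) = Ŝ·L(t)⁻¹, the system ẏ = A(t)y + B(t)(u + Δ) experiences the equivalent control u_eq = K(t)·y − Δ.) -/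
open Matrix
attribute [local instance] Matrix.normedAddCommGroup Matrix.normedSpace

theorem helper_mulVec {p q : ℕ} {M : ℝ → Matrix (Fin p) (Fin q) ℝ}
    {v : ℝ → Fin q → ℝ} {M' : Matrix (Fin p) (Fin q) ℝ} {v' : Fin q → ℝ} {t : ℝ}
    (hM : HasDerivAt M M' t) (hv : HasDerivAt v v' t) :
    HasDerivAt (fun s => (M s).mulVec (v s))
      (M'.mulVec (v t) + (M t).mulVec v') t := by
  rw [hasDerivAt_pi]
  intro i
  have hMij : ∀ j, HasDerivAt (fun s => M s i j) (M' i j) t := fun j =>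
    hasDerivAt_pi.mp (hasDerivAt_pi.mp hM i) j
  have hvj : ∀ j, HasDerivAt (fun s => v s j) (v' j) t := fun j =>
    hasDerivAt_pi.mp hv j
  have : HasDerivAt (fun s => ∑ j, M s i j * v s j)
      (∑ j, (M' i j * v t j + M t i j * v' j)) t :=
    HasDerivAt.fun_sum (fun j _ => (hMij j).mul (hvj j))
  simpa [Matrix.mulVec, dotProduct, Finset.sum_add_distrib] using this

theorem helper_det {k : ℕ} {M : ℝ → Matrix (Fin k) (Fin k) ℝ} {t : ℝ}
    (h : ∀ i j, DifferentiableAt ℝ (fun s => M s i j) t) :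
    DifferentiableAt ℝ (fun s => (M s).det) t := by
  simp only [Matrix.det_apply']
  exact DifferentiableAt.fun_sum fun σ _ =>
    (DifferentiableAt.fun_finsetProd (fun i _ => h (σ i) i)).const_mul _

theorem helper_inv {k : ℕ} {M : ℝ → Matrix (Fin k) (Fin k) ℝ} {t : ℝ}
    (h : DifferentiableAt ℝ M t) (hu : IsUnit (M t).det) :
    DifferentiableAt ℝ (fun s => (M s)⁻¹) t := by
  have hij : ∀ i j, DifferentiableAt ℝ (fun s => M s i j) t := fun i j =>
    (differentiableAt_pi.mp (differentiableAt_pi.mp h i)) j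
  refine differentiableAt_pi.mpr ?_
  intro i
  rw [differentiableAt_pi]
  intro j
  have : (fun s => (M s)⁻¹ i j)
      = fun s => ((M s).det)⁻¹ * ((M s).updateRow j (Pi.single i 1)).det := by
    funext s
    rw [Matrix.inv_def, Matrix.smul_apply, Matrix.adjugate_apply, smul_eq_mul,
      Ring.inverse_eq_inv']
  rw [this]
  have hdet : DifferentiableAt ℝ (fun s => (M s).det) t := helper_det hij
  have hadj : DifferentiableAt ℝ (fun s => ((M s).updateRow j (Pi.single i 1)).det) t := by
    apply helper_det
    intro a b
    by_cases hab : a = j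
    · simp [Matrix.updateRow_apply, hab]
    · simp only [Matrix.updateRow_apply, hab, if_false]
      exact hij a b
  exact (hdet.inv (by simpa [isUnit_iff_ne_zero] using hu)).mul hadj

theorem helper_mul {p q r : ℕ} {M : ℝ → Matrix (Fin p) (Fin q) ℝ}
    {P : ℝ → Matrix (Fin q) (Fin r) ℝ} {M' : Matrix (Fin p) (Fin q) ℝ}
    {P' : Matrix (Fin q) (Fin r) ℝ} {t : ℝ}
    (hM : HasDerivAt M M' t) (hP : HasDerivAt P P' t) :
    HasDerivAt (fun s => M s * P s) (M' * P t + M t * P') t := by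
  refine hasDerivAt_pi.mpr ?_
  intro i
  rw [hasDerivAt_pi]
  intro j
  have hMij : ∀ a b, HasDerivAt (fun s => M s a b) (M' a b) t := fun a b =>
    hasDerivAt_pi.mp (hasDerivAt_pi.mp hM a) b
  have hPij : ∀ a b, HasDerivAt (fun s => P s a b) (P' a b) t := fun a b =>
    hasDerivAt_pi.mp (hasDerivAt_pi.mp hP a) b
  have : HasDerivAt (fun s => ∑ c, M s i c * P s c j)
      (∑ c, (M' i c * P t c j + M t i c * P' c j)) t :=
    HasDerivAt.fun_sum (fun c _ => (hMij i c).mul (hPij c j))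
  simpa [Matrix.mul_apply, Finset.sum_add_distrib] using this

/-- Equivalent control on the sliding manifold defined by `S(t) = Ŝ·L(t)⁻¹`:
if `L′ = A_cl·L − L·F` with `A_cl = A + B·K`, `Ŝ` annihilates an `F`-invariant
subspace, `Ŝ·L(t)⁻¹·B(t)` is invertible, `ẏ = A(t)·y + B(t)·w` and
`Ŝ·L(t)⁻¹·y(t) ≡ 0`, then `w(t) = K(t)·y(t)` for every `t`. -/
theorem stmt8 {n m : ℕ}
    (A : ℝ → Matrix (Fin n) (Fin n) ℝ) (B : ℝ → Matrix (Fin n) (Fin m) ℝ)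
    (K : ℝ → Matrix (Fin m) (Fin n) ℝ)
    (F : Matrix (Fin n) (Fin n) ℝ) (L : ℝ → Matrix (Fin n) (Fin n) ℝ)
    (hLinv : ∀ t, IsUnit (L t))
    (hL : ∀ t, HasDerivAt L ((A t + B t * K t) * L t - L t * F) t)
    (Shat : Matrix (Fin m) (Fin n) ℝ)
    (hF : ∀ z : Fin n → ℝ, Shat.mulVec z = 0 → Shat.mulVec (F.mulVec z) = 0)
    (hSB : ∀ t, IsUnit (Shat * (L t)⁻¹ * B t))
    (y : ℝ → Fin n → ℝ) (w : ℝ → Fin m → ℝ)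
    (hy : ∀ t, HasDerivAt y ((A t).mulVec (y t) + (B t).mulVec (w t)) t)
    (hslide : ∀ t, (Shat * (L t)⁻¹).mulVec (y t) = 0) :
    ∀ t, w t = (K t).mulVec (y t) := by
  intro t
  set N : ℝ → Matrix (Fin n) (Fin n) ℝ := fun s => (L s)⁻¹ with hNdef
  have hDet : ∀ s, IsUnit (L s).det := fun s => (Matrix.isUnit_iff_isUnit_det _).mp (hLinv s)
  have hNL : ∀ s, N s * L s = 1 := fun s => Matrix.nonsing_inv_mul _ (hDet s)
  have hLN : L t * N t = 1 := Matrix.mul_nonsing_inv _ (hDet t)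
  set D : Matrix (Fin n) (Fin n) ℝ := (A t + B t * K t) * L t - L t * F with hDdef
  have hNdiff : DifferentiableAt ℝ N t := helper_inv (hL t).differentiableAt (hDet t)
  set N' : Matrix (Fin n) (Fin n) ℝ := deriv N t with hN'def
  have hN' : HasDerivAt N N' t := hNdiff.hasDerivAt
  -- derivative of N * L is zero
  have h1 : HasDerivAt (fun s => N s * L s) (N' * L t + N t * D) t := helper_mul hN' (hL t)
  have h2 : HasDerivAt (fun s => N s * L s) 0 t := by
    have : (fun s => N s * L s) = fun _ => (1 : Matrix (Fin n) (Fin n) ℝ) := funext hNL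
    rw [this]; exact hasDerivAt_const t 1
  have hsum : N' * L t + N t * D = 0 := h1.unique h2
  have hN'eq : N' = F * N t - N t * (A t + B t * K t) := by
    have h3 : N' * L t = -(N t * D) := by
      rw [eq_neg_iff_add_eq_zero]; exact hsum
    have h4 := congrArg (· * N t) h3
    simp only [hDdef] at h4
    calc N' = N' * (L t * N t) := by rw [hLN, mul_one]
      _ = N' * L t * N t := by rw [Matrix.mul_assoc]
      _ = -(N t * ((A t + B t * K t) * L t - L t * F)) * N t := h4
      _ = F * N t - N t * (A t + B t * K t) := by
          rw [Matrix.mul_sub, ← Matrix.mul_assoc, ← Matrix.mul_assoc]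
          rw [neg_sub, Matrix.sub_mul, Matrix.mul_assoc (N t * (L t)) F (N t)]
          rw [Matrix.mul_assoc (N t * (A t + B t * K t)) (L t) (N t)]
          rw [hNL t, hLN, one_mul, mul_one]
  -- derivative of the sliding function is zero
  have hg1 : HasDerivAt (fun s => Shat.mulVec ((N s).mulVec (y s)))
      ((0 : Matrix (Fin m) (Fin n) ℝ).mulVec ((N t).mulVec (y t)) +
        Shat.mulVec (N'.mulVec (y t) + (N t).mulVec ((A t).mulVec (y t) + (B t).mulVec (w t)))) t :=
    helper_mulVec (hasDerivAt_const t Shat) (helper_mulVec hN' (hy t))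
  have hg2 : HasDerivAt (fun s => Shat.mulVec ((N s).mulVec (y s))) 0 t := by
    have : (fun s => Shat.mulVec ((N s).mulVec (y s))) = fun _ => (0 : Fin m → ℝ) := by
      funext s
      rw [Matrix.mulVec_mulVec]
      exact hslide s
    rw [this]; exact hasDerivAt_const t 0
  have key : Shat.mulVec (N'.mulVec (y t) + (N t).mulVec ((A t).mulVec (y t) + (B t).mulVec (w t))) = 0 := by
    have := hg1.unique hg2
    simpa [Matrix.zero_mulVec] using this
  -- the F-invariance condition
  have ht0 : Shat.mulVec ((N t).mulVec (y t)) = 0 := by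
    rw [Matrix.mulVec_mulVec]; exact hslide t
  have hFz : Shat.mulVec (F.mulVec ((N t).mulVec (y t))) = 0 := hF _ ht0
  -- expand key
  have key2 : (Shat * N t * B t).mulVec (w t) = (Shat * N t * B t * K t).mulVec (y t) := by
    have e1 : Shat.mulVec (N'.mulVec (y t)) =
        Shat.mulVec (F.mulVec ((N t).mulVec (y t))) - (Shat * N t * (A t + B t * K t)).mulVec (y t) := by
      rw [hN'eq]
      simp [Matrix.sub_mulVec, Matrix.mulVec_sub, Matrix.mulVec_mulVec, Matrix.mul_assoc]
    have e2 : Shat.mulVec ((N t).mulVec ((A t).mulVec (y t) + (B t).mulVec (w t))) =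
        (Shat * N t * A t).mulVec (y t) + (Shat * N t * B t).mulVec (w t) := by
      simp [Matrix.mulVec_add, Matrix.mulVec_mulVec, Matrix.mul_assoc]
    rw [Matrix.mulVec_add, e1, e2, hFz] at key
    have e3 : (Shat * N t * (A t + B t * K t)).mulVec (y t) =
        (Shat * N t * A t).mulVec (y t) + (Shat * N t * B t * K t).mulVec (y t) := by
      rw [Matrix.mul_add, Matrix.add_mulVec, Matrix.mul_assoc (Shat * N t) (B t) (K t)]
    rw [e3] at key
    funext i
    have hk := congrFun key i
    simp only [Pi.add_apply, Pi.sub_apply, Pi.zero_apply] at hk ⊢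
    linarith
  -- invert E = Shat * (L t)⁻¹ * B t
  have hE : IsUnit (Shat * N t * B t) := hSB t
  have hEinv : (Shat * N t * B t)⁻¹ * (Shat * N t * B t) = 1 :=
    Matrix.nonsing_inv_mul _ ((Matrix.isUnit_iff_isUnit_det _).mp hE)
  calc w t = ((Shat * N t * B t)⁻¹ * (Shat * N t * B t)) *ᵥ w t := by
        rw [hEinv, Matrix.one_mulVec]
    _ = (Shat * N t * B t)⁻¹ *ᵥ ((Shat * N t * B t) *ᵥ w t) := by
        rw [Matrix.mulVec_mulVec]
    _ = (Shat * N t * B t)⁻¹ *ᵥ ((Shat * N t * B t * K t) *ᵥ y t) := by rw [key2]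
    _ = (Shat * N t * B t)⁻¹ *ᵥ ((Shat * N t * B t) *ᵥ ((K t) *ᵥ y t)) := by
        simp [Matrix.mulVec_mulVec, Matrix.mul_assoc]
    _ = ((Shat * N t * B t)⁻¹ * (Shat * N t * B t)) *ᵥ ((K t) *ᵥ y t) := by
        rw [Matrix.mulVec_mulVec]
    _ = (K t) *ᵥ y t := by rw [hEinv, Matrix.one_mulVec]
end

section
/- Let V be a real vector space of finite dimension n and let f : V → V be a linear map. (i) For every even natural number d with d < n there exists an f-invariant subspace of V of dimension d. (ii) If n ≥ 2, then there exists an f-invariant subspace of V of odd dimension d with d < n if and only if f has a real eigenvalue. -/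
open Module Polynomial

section Aux

variable {V : Type*} [AddCommGroup V] [Module ℝ V] [FiniteDimensional ℝ V]

/-- finrank of preimage under the quotient map. -/
lemma finrank_comap_mkQ (P : Submodule ℝ V) (S : Submodule ℝ (V ⧸ P)) :
    finrank ℝ (S.comap P.mkQ) = finrank ℝ S + finrank ℝ P := by
  set U := S.comap P.mkQ with hU
  have hPU : P ≤ U := by
    intro x hx
    simp only [hU, Submodule.mem_comap, Submodule.mkQ_apply]
    rw [(Submodule.Quotient.mk_eq_zero P).2 hx]
    exact S.zero_mem
  have hg : ∀ x ∈ U, P.mkQ x ∈ S := fun x hx => hx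
  let g : U →ₗ[ℝ] S := P.mkQ.restrict hg
  have hker : LinearMap.ker g = P.comap U.subtype := by
    ext x
    simp only [LinearMap.mem_ker, Submodule.mem_comap, Submodule.coe_subtype]
    constructor
    · intro h
      have : P.mkQ (x : V) = 0 := congrArg Subtype.val h
      rwa [← LinearMap.mem_ker, Submodule.ker_mkQ] at this
    · intro h
      apply Subtype.ext
      show P.mkQ (x : V) = 0
      rwa [← LinearMap.mem_ker, Submodule.ker_mkQ]
  have hrange : LinearMap.range g = ⊤ := by
    rw [LinearMap.range_eq_top]
    rintro ⟨s, hs⟩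
    obtain ⟨x, rfl⟩ := P.mkQ_surjective s
    exact ⟨⟨x, hs⟩, rfl⟩
  have h1 := LinearMap.finrank_range_add_finrank_ker g
  rw [hrange, finrank_top, hker] at h1
  rw [← h1, (Submodule.comapSubtypeEquivOfLe hPU).finrank_eq]

lemma eigen_of_minpoly_root {f : V →ₗ[ℝ] V} {r : ℝ} (h : (minpoly ℝ f).IsRoot r) :
    ∃ (lam : ℝ) (v : V), v ≠ 0 ∧ f v = lam • v := by
  have he : Module.End.HasEigenvalue f r := Module.End.hasEigenvalue_of_isRoot h
  obtain ⟨v, hv⟩ := he.exists_hasEigenvector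
  exact ⟨r, v, hv.2, hv.apply_eq_smul⟩

/-- A real endomorphism without real eigenvalues has a 2-dimensional invariant subspace. -/
lemma exists_two_dim [Nontrivial V] (f : V →ₗ[ℝ] V)
    (hno : ¬ ∃ (lam : ℝ) (v : V), v ≠ 0 ∧ f v = lam • v) :
    ∃ P : Submodule ℝ V, (∀ x ∈ P, f x ∈ P) ∧ finrank ℝ P = 2 := by
  have hint : IsIntegral ℝ f := f.isIntegral
  have hm0 : minpoly ℝ f ≠ 0 := minpoly.ne_zero hint
  have hmu : ¬ IsUnit (minpoly ℝ f) := minpoly.not_isUnit ℝ f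
  obtain ⟨p, hpirr, hpdvd⟩ := WfDvdMonoid.exists_irreducible_factor hmu hm0
  have hp0 : p ≠ 0 := hpirr.ne_zero
  have hproot : ∀ r : ℝ, ¬ p.IsRoot r := by
    intro r hr
    obtain ⟨q, hq⟩ := hpdvd
    apply hno
    apply eigen_of_minpoly_root (r := r)
    rw [hq]
    simp [IsRoot, hr.eq_zero]
  have hpd : p.natDegree = 2 := by
    have h2 : p.natDegree ≤ 2 := hpirr.natDegree_le_two
    have h1 : 0 < p.natDegree :=
      natDegree_pos_iff_degree_pos.2 (degree_pos_of_irreducible hpirr)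
    rcases (by omega : p.natDegree = 1 ∨ p.natDegree = 2) with h | h
    · exfalso
      have hc1 : p.coeff 1 ≠ 0 := by
        have := mt leadingCoeff_eq_zero.mp hp0
        rwa [leadingCoeff, h] at this
      have hp : p = C (p.coeff 1) * X + C (p.coeff 0) :=
        eq_X_add_C_of_natDegree_le_one (by omega)
      apply hproot (-(p.coeff 0) / p.coeff 1)
      rw [IsRoot]
      conv_lhs => rw [hp]
      simp only [eval_add, eval_mul, eval_C, eval_X]
      rw [← hp]
      field_simp
      ring
    · exact h
  -- kernel of p(f) is nonzero
  have hker : LinearMap.ker (aeval f p) ≠ ⊥ := by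
    intro hbot
    have hinj : Function.Injective (aeval f p) := LinearMap.ker_eq_bot.mp hbot
    obtain ⟨q, hq⟩ := hpdvd
    have hq0 : q ≠ 0 := by
      rintro rfl
      rw [mul_zero] at hq
      exact hm0 hq
    have haev : aeval f (minpoly ℝ f) = 0 := minpoly.aeval ℝ f
    rw [hq, map_mul] at haev
    have hqz : aeval f q = 0 := by
      ext x
      apply hinj
      have : (aeval f p * aeval f q) x = 0 := by rw [haev]; rfl
      rw [Module.End.mul_apply] at this
      simpa using this
    have hdvd2 : minpoly ℝ f ∣ q := minpoly.dvd ℝ f hqz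
    have hle := Polynomial.natDegree_le_of_dvd hdvd2 hq0
    have heq : (minpoly ℝ f).natDegree = p.natDegree + q.natDegree := by
      rw [hq, natDegree_mul hp0 hq0]
    omega
  obtain ⟨v, hvmem, hv0⟩ := Submodule.exists_mem_ne_zero_of_ne_bot hker
  rw [LinearMap.mem_ker] at hvmem
  -- evaluate p at f on v
  set c0 := p.coeff 0
  set c1 := p.coeff 1
  set c2 := p.coeff 2
  have hc2 : c2 ≠ 0 := by
    have := mt leadingCoeff_eq_zero.mp hp0
    rwa [leadingCoeff, hpd] at this
  have hexp : c0 • v + c1 • f v + c2 • f (f v) = 0 := by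
    have hps : p = ∑ i ∈ Finset.range (p.natDegree + 1), C (p.coeff i) * X ^ i :=
      p.as_sum_range_C_mul_X_pow
    rw [hpd] at hps
    have := hvmem
    conv_lhs at this => rw [hps]
    simp only [map_sum, map_mul, aeval_C, aeval_X_pow, LinearMap.sum_apply] at this
    rw [Finset.sum_range_succ, Finset.sum_range_succ, Finset.sum_range_one] at this
    simpa [pow_succ, Algebra.smul_def, Module.End.mul_apply, algebraMap_end_apply]
      using this
  have hffv : f (f v) = (-(c2⁻¹ * c1)) • f v + (-(c2⁻¹ * c0)) • v := by
    refine smul_right_injective V hc2 ?_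
    show c2 • f (f v) = c2 • ((-(c2⁻¹ * c1)) • f v + (-(c2⁻¹ * c0)) • v)
    rw [smul_add, smul_smul, smul_smul, mul_neg, mul_neg,
      mul_inv_cancel_left₀ hc2, mul_inv_cancel_left₀ hc2]
    linear_combination (norm := module) hexp
  refine ⟨Submodule.span ℝ {v, f v}, ?_, ?_⟩
  · have hvW : v ∈ Submodule.span ℝ ({v, f v} : Set V) :=
      Submodule.subset_span (by simp)
    have hfvW : f v ∈ Submodule.span ℝ ({v, f v} : Set V) :=
      Submodule.subset_span (by simp)
    have hffvW : f (f v) ∈ Submodule.span ℝ ({v, f v} : Set V) := by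
      rw [hffv]
      exact Submodule.add_mem _ (Submodule.smul_mem _ _ hfvW) (Submodule.smul_mem _ _ hvW)
    intro x hx
    induction hx using Submodule.span_induction with
    | mem y hy =>
      rcases hy with hy | hy
      · rw [hy]; exact hfvW
      · rw [Set.mem_singleton_iff] at hy; rw [hy]; exact hffvW
    | zero => simp
    | add a b _ _ ha hb => rw [map_add]; exact Submodule.add_mem _ ha hb
    | smul t a _ ha => rw [map_smul]; exact Submodule.smul_mem _ _ ha
  · have hli : LinearIndependent ℝ ![v, f v] := by
      rw [linearIndependent_fin2]
      constructor
      · simp only [Matrix.cons_val_one, Matrix.head_cons, Matrix.cons_val_zero]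
        intro hfv0
        exact hno ⟨0, v, hv0, by rw [hfv0, zero_smul]⟩
      · intro a ha
        simp only [Matrix.cons_val_one, Matrix.head_cons, Matrix.cons_val_zero] at ha
        -- a • f v = v
        have hfva : f v ≠ 0 := by
          intro hfv0
          exact hno ⟨0, v, hv0, by rw [hfv0, zero_smul]⟩
        have ha0 : a ≠ 0 := by
          rintro rfl
          rw [zero_smul] at ha
          exact hv0 ha.symm
        exact hno ⟨a⁻¹, v, hv0, by
          conv_rhs => rw [← ha, smul_smul, inv_mul_cancel₀ ha0, one_smul]⟩
    have hcard := finrank_span_eq_card hli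
    have hrange : Set.range ![v, f v] = ({v, f v} : Set V) := by
      ext x
      simp [Fin.exists_fin_two, or_comm]
    rw [hrange] at hcard
    rw [hcard]
    simp

/-- If an endomorphism has a real eigenvalue, it has an invariant hyperplane. -/
lemma exists_hyperplane (f : V →ₗ[ℝ] V) {lam : ℝ} {v : V} (hv : v ≠ 0)
    (hfv : f v = lam • v) :
    ∃ H : Submodule ℝ V, (∀ x ∈ H, f x ∈ H) ∧ finrank ℝ H = finrank ℝ V - 1 := by
  set g : V →ₗ[ℝ] V := f - lam • LinearMap.id with hg
  have hgv : g v = 0 := by simp [hg, hfv]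
  have hninj : ¬ Function.Injective g := by
    intro h
    exact hv (h (by rw [hgv, map_zero]))
  have hnsurj : ¬ Function.Surjective g := fun h =>
    hninj (LinearMap.injective_iff_surjective.mpr h)
  have hlt : LinearMap.range g < ⊤ := lt_top_iff_ne_top.mpr fun h =>
    hnsurj (LinearMap.range_eq_top.mp h)
  obtain ⟨φ, hφ0, hφ⟩ :=
    Submodule.exists_dual_map_eq_bot_of_lt_top hlt inferInstance
  refine ⟨LinearMap.ker φ, ?_, ?_⟩
  · intro x hx
    rw [LinearMap.mem_ker] at hx ⊢
    have h1 : φ (g x) = 0 := by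
      have : φ (g x) ∈ (LinearMap.range g).map φ :=
        Submodule.mem_map_of_mem (LinearMap.mem_range_self g x)
      rw [hφ] at this
      simpa using this
    have h2 : f x = g x + lam • x := by simp [hg]
    rw [h2, map_add, map_smul, h1, hx, smul_zero, add_zero]
  · have hr : finrank ℝ (LinearMap.range φ) = 1 := by
      have hne : LinearMap.range φ ≠ ⊥ := by
        rw [Ne, LinearMap.range_eq_bot]
        exact hφ0
      have hpos : finrank ℝ (LinearMap.range φ) ≠ 0 := by
        rw [Ne, Submodule.finrank_eq_zero]
        exact hne
      have hle : finrank ℝ (LinearMap.range φ) ≤ 1 := by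
        have := (LinearMap.range φ).finrank_le
        simpa using this
      omega
    have := LinearMap.finrank_range_add_finrank_ker φ
    omega

end Aux

/-- An endomorphism of a real f.d. space without real eigenvalues lives on an
even-dimensional space. -/
lemma even_of_no_eigen (n : ℕ) :
    ∀ (V : Type u) [AddCommGroup V] [Module ℝ V] [FiniteDimensional ℝ V]
      (f : V →ₗ[ℝ] V), finrank ℝ V = n →
      (¬ ∃ (lam : ℝ) (v : V), v ≠ 0 ∧ f v = lam • v) → Even n := by
  induction n using Nat.strong_induction_on with
  | _ n ih =>
  intro V _ _ _ f hn hno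
  rcases Nat.eq_zero_or_pos n with h0 | hpos
  · exact h0 ▸ Even.zero
  have : Nontrivial V := by
    rw [← Module.finrank_pos_iff (R := ℝ), hn]
    exact hpos
  obtain ⟨P, hPinv, hP2⟩ := exists_two_dim f hno
  have hle : P ≤ P.comap f := fun x hx => hPinv x hx
  set fbar : V ⧸ P →ₗ[ℝ] V ⧸ P := P.mapQ P f hle with hfbar
  have hcomm : ∀ x : V, fbar (P.mkQ x) = P.mkQ (f x) := fun x => by
    simp [hfbar, Submodule.mapQ_apply]
  have hn2 : 2 ≤ n := by
    have := P.finrank_le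
    omega
  have hq : finrank ℝ (V ⧸ P) = n - 2 := by
    have := Submodule.finrank_quotient_add_finrank P
    omega
  have hnoq : ¬ ∃ (lam : ℝ) (x : V ⧸ P), x ≠ 0 ∧ fbar x = lam • x := by
    rintro ⟨lam, x, hx0, hx⟩
    set U := (Submodule.span ℝ {x}).comap P.mkQ with hUdef
    have hU3 : finrank ℝ U = 3 := by
      rw [hUdef, finrank_comap_mkQ, finrank_span_singleton hx0, hP2]
    have hmaps : ∀ u ∈ U, f u - lam • u ∈ P := by
      intro u hu
      have hu' : P.mkQ u ∈ Submodule.span ℝ {x} := hu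
      obtain ⟨t, ht⟩ := Submodule.mem_span_singleton.mp hu'
      have : P.mkQ (f u - lam • u) = 0 := by
        rw [map_sub, map_smul, ← hcomm, ← ht, map_smul, hx]
        rw [smul_smul, smul_smul, mul_comm]
        exact sub_self _
      rwa [← LinearMap.mem_ker, Submodule.ker_mkQ] at this
    set h : V →ₗ[ℝ] V := f - lam • LinearMap.id with hh
    have hmaps' : ∀ u ∈ U, h u ∈ P := by
      intro u hu
      have : h u = f u - lam • u := by simp [hh]
      rw [this]
      exact hmaps u hu
    set g : U →ₗ[ℝ] P := h.restrict hmaps' with hgdef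
    have hginj : ¬ Function.Injective g := by
      intro hinj
      have := LinearMap.finrank_le_finrank_of_injective hinj
      rw [hU3, hP2] at this
      omega
    have hkerg : LinearMap.ker g ≠ ⊥ := fun hb => hginj (LinearMap.ker_eq_bot.mp hb)
    obtain ⟨u, humem, hu0⟩ := Submodule.exists_mem_ne_zero_of_ne_bot hkerg
    rw [LinearMap.mem_ker] at humem
    apply hno
    refine ⟨lam, (u : V), ?_, ?_⟩
    · simpa using hu0
    · have : h (u : V) = 0 := congrArg Subtype.val humem
      have h2 : f (u : V) - lam • (u : V) = 0 := by simpa [hh] using this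
      exact sub_eq_zero.mp h2
  have hev := ih (n - 2) (by omega) (V ⧸ P) fbar hq hnoq
  obtain ⟨k, hk⟩ := hev
  exact ⟨k + 1, by omega⟩

/-- Main induction: invariant subspaces of every even dimension `d ≤ n` exist. -/
lemma even_dims (n : ℕ) :
    ∀ (V : Type u) [AddCommGroup V] [Module ℝ V] [FiniteDimensional ℝ V]
      (f : V →ₗ[ℝ] V), finrank ℝ V = n →
      ∀ d : ℕ, Even d → d ≤ n →
      ∃ W : Submodule ℝ V, (∀ x ∈ W, f x ∈ W) ∧ finrank ℝ W = d := by
  induction n using Nat.strong_induction_on with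
  | _ n ih =>
  intro V _ _ _ f hn d hd hdn
  rcases eq_or_lt_of_le hdn with rfl | hlt
  · exact ⟨⊤, fun x _ => Submodule.mem_top, by rw [finrank_top]; exact hn⟩
  rcases Nat.eq_zero_or_pos d with rfl | hdpos
  · refine ⟨⊥, ?_, finrank_bot ℝ V⟩
    intro x hx
    rw [Submodule.mem_bot] at hx ⊢
    rw [hx, map_zero]
  have : Nontrivial V := by
    rw [← Module.finrank_pos_iff (R := ℝ), hn]
    omega
  by_cases heig : ∃ (lam : ℝ) (v : V), v ≠ 0 ∧ f v = lam • v
  · obtain ⟨lam, v, hv0, hfv⟩ := heig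
    obtain ⟨H, hHinv, hHrank⟩ := exists_hyperplane f hv0 hfv
    set g : H →ₗ[ℝ] H := f.restrict hHinv with hgdef
    have hHr : finrank ℝ H = n - 1 := by rw [hHrank, hn]
    obtain ⟨W', hW'inv, hW'r⟩ := ih (n - 1) (by omega) H g hHr d hd (by omega)
    refine ⟨W'.map H.subtype, ?_, ?_⟩
    · intro x hx
      rw [Submodule.mem_map] at hx ⊢
      obtain ⟨y, hy, rfl⟩ := hx
      refine ⟨g y, hW'inv y hy, ?_⟩
      simp [hgdef, LinearMap.restrict_apply]
    · rw [Submodule.finrank_map_subtype_eq]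
      exact hW'r
  · obtain ⟨P, hPinv, hP2⟩ := exists_two_dim f heig
    have hle : P ≤ P.comap f := fun x hx => hPinv x hx
    set fbar : V ⧸ P →ₗ[ℝ] V ⧸ P := P.mapQ P f hle with hfbar
    have hcomm : ∀ x : V, fbar (P.mkQ x) = P.mkQ (f x) := fun x => by
      simp [hfbar, Submodule.mapQ_apply]
    have hd2 : 2 ≤ d := by
      obtain ⟨k, hk⟩ := hd
      omega
    have hn2 : 2 ≤ n := by
      have := P.finrank_le
      omega
    have hq : finrank ℝ (V ⧸ P) = n - 2 := by
      have := Submodule.finrank_quotient_add_finrank P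
      omega
    have hd2' : Even (d - 2) := by
      obtain ⟨k, hk⟩ := hd
      exact ⟨k - 1, by omega⟩
    obtain ⟨W', hW'inv, hW'r⟩ :=
      ih (n - 2) (by omega) (V ⧸ P) fbar hq (d - 2) hd2' (by omega)
    refine ⟨W'.comap P.mkQ, ?_, ?_⟩
    · intro x hx
      rw [Submodule.mem_comap] at hx ⊢
      rw [← hcomm]
      exact hW'inv _ hx
    · rw [finrank_comap_mkQ, hW'r, hP2]
      omega

/-- Existence of real invariant subspaces for an endomorphism of an `n`-dimensional
real vector space: (i) invariant subspaces of every even dimension `d < n` exist;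
(ii) for `n ≥ 2`, an invariant subspace of odd dimension `d < n` exists iff `f` has
a real eigenvalue. -/
theorem stmt9 (V : Type*) [AddCommGroup V] [Module ℝ V] [FiniteDimensional ℝ V]
    (f : V →ₗ[ℝ] V) :
    (∀ d : ℕ, Even d → d < Module.finrank ℝ V →
      ∃ W : Submodule ℝ V, (∀ x ∈ W, f x ∈ W) ∧ Module.finrank ℝ W = d) ∧
    (2 ≤ Module.finrank ℝ V →
      ((∃ W : Submodule ℝ V, (∀ x ∈ W, f x ∈ W) ∧ Odd (Module.finrank ℝ W) ∧
          Module.finrank ℝ W < Module.finrank ℝ V) ↔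
        ∃ (lam : ℝ) (v : V), v ≠ 0 ∧ f v = lam • v)) := by
  constructor
  · intro d hd hdn
    exact even_dims (finrank ℝ V) V f rfl d hd hdn.le
  · intro hn2
    constructor
    · rintro ⟨W, hWinv, hWodd, hWlt⟩
      by_contra hno
      set g : W →ₗ[ℝ] W := f.restrict hWinv with hgdef
      have hgno : ¬ ∃ (lam : ℝ) (w : W), w ≠ 0 ∧ g w = lam • w := by
        rintro ⟨lam, w, hw0, hgw⟩
        apply hno
        refine ⟨lam, (w : V), by simpa using hw0, ?_⟩
        have := congrArg Subtype.val hgw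
        simpa [hgdef, LinearMap.restrict_apply] using this
      have := even_of_no_eigen (finrank ℝ W) W g rfl hgno
      exact (Nat.not_odd_iff_even.mpr this) hWodd
    · rintro ⟨lam, v, hv0, hfv⟩
      refine ⟨Submodule.span ℝ {v}, ?_, ?_, ?_⟩
      · intro x hx
        obtain ⟨t, rfl⟩ := Submodule.mem_span_singleton.mp hx
        rw [map_smul, hfv]
        exact Submodule.smul_mem _ _
          (Submodule.smul_mem _ _ (Submodule.mem_span_singleton_self v))
      · rw [finrank_span_singleton hv0]
        exact odd_one
      · rw [finrank_span_singleton hv0]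
        omega
end

section
/- Let V be a real vector space of finite odd dimension n and let f : V → V be a linear map. Then for every natural number d with d < n there exists an f-invariant subspace of V of dimension d. -/
open Polynomial Module

/-- A real polynomial of odd natural degree has a root. -/
lemma aux_odd_root : ∀ (n : ℕ) (p : ℝ[X]), p.natDegree = n → Odd n → ∃ x, p.IsRoot x := by
  intro n
  induction n using Nat.strong_induction_on with
  | _ n ih =>
    intro p hpn hodd
    have hn1 : 1 ≤ n := by
      rcases hodd with ⟨k, hk⟩; omega
    have hp0 : p ≠ 0 := by
      rintro rfl; simp at hpn; omega
    have hpu : ¬ IsUnit p := not_isUnit_of_natDegree_pos p (by omega)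
    obtain ⟨q, hq_irr, r, rfl⟩ := WfDvdMonoid.exists_irreducible_factor hpu hp0
    have hq0 : q ≠ 0 := hq_irr.ne_zero
    have hr0 : r ≠ 0 := by rintro rfl; simp at hp0
    have hdeg : q.natDegree + r.natDegree = n := by
      rw [← hpn, natDegree_mul hq0 hr0]
    have h2 := hq_irr.natDegree_le_two
    have h1 := hq_irr.natDegree_pos
    by_cases hq1 : q.natDegree = 1
    · obtain ⟨x, hx⟩ := exists_root_of_degree_eq_one
        ((degree_eq_iff_natDegree_eq hq0).2 hq1)
      exact ⟨x, by simp [IsRoot.def, hx.eq_zero]⟩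
    · have hq2 : q.natDegree = 2 := by omega
      have hro : Odd r.natDegree := by
        rw [Nat.odd_iff] at hodd ⊢; omega
      obtain ⟨x, hx⟩ := ih r.natDegree (by omega) r rfl hro
      exact ⟨x, by simp [IsRoot.def, hx.eq_zero]⟩


/-- An endomorphism of an odd-dimensional real vector space has an eigenvector. -/
lemma aux_eigen (V : Type*) [AddCommGroup V] [Module ℝ V] [FiniteDimensional ℝ V]
    (hodd : Odd (Module.finrank ℝ V)) (f : V →ₗ[ℝ] V) :
    ∃ (μ : ℝ) (v : V), v ≠ 0 ∧ f v = μ • v := by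
  have hdeg : f.charpoly.natDegree = Module.finrank ℝ V := f.charpoly_natDegree
  obtain ⟨μ, hμ⟩ := aux_odd_root f.charpoly.natDegree f.charpoly rfl (by rw [hdeg]; exact hodd)
  -- pass to matrices
  classical
  let b := Module.finBasis ℝ V
  let M := LinearMap.toMatrix b b f
  have hM : M.charpoly = f.charpoly := f.charpoly_toMatrix b
  have hdet0 : (Matrix.scalar _ μ - M).det = 0 := by
    have := _root_.eval_det (Matrix.charmatrix M) μ
    rw [← Matrix.charpoly, Matrix.matPolyEquiv_charmatrix] at this
    simp only [eval_sub, eval_X, eval_C] at this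
    rw [← this, hM]
    exact hμ.eq_zero
  have hdetf : LinearMap.det (μ • (LinearMap.id : V →ₗ[ℝ] V) - f) = 0 := by
    rw [← LinearMap.det_toMatrix b]
    rw [map_sub]
    have : LinearMap.toMatrix b b (μ • (LinearMap.id : V →ₗ[ℝ] V)) = Matrix.scalar _ μ := by
      rw [map_smul, LinearMap.toMatrix_id]
      ext i j
      by_cases hij : i = j <;> simp [hij, Matrix.one_apply, Matrix.scalar_apply,
        Matrix.diagonal_apply]
    rw [this]
    exact hdet0
  obtain ⟨v, hv, hv0⟩ := (Submodule.ne_bot_iff _).1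
    (LinearMap.bot_lt_ker_of_det_eq_zero hdetf).ne'
  refine ⟨μ, v, hv0, ?_⟩
  have := LinearMap.mem_ker.1 hv
  simp only [LinearMap.sub_apply, LinearMap.smul_apply, LinearMap.id_apply] at this
  exact (sub_eq_zero.mp this).symm

lemma aux_span_pair_finrank {V : Type*} [AddCommGroup V] [Module ℝ V] [FiniteDimensional ℝ V]
    (v w : V) (hv : v ≠ 0) :
    Module.finrank ℝ (Submodule.span ℝ ({v, w} : Set V)) = 1 ∨
    Module.finrank ℝ (Submodule.span ℝ ({v, w} : Set V)) = 2 := by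
  have hle : Module.finrank ℝ (Submodule.span ℝ ({v, w} : Set V)) ≤ 2 := by
    rw [show ({v, w} : Set V) = insert v {w} from rfl, Submodule.span_insert]
    refine (Submodule.finrank_add_le_finrank_add_finrank _ _).trans ?_
    have h1 : Module.finrank ℝ (ℝ ∙ v) = 1 := finrank_span_singleton hv
    have h2 : Module.finrank ℝ (Submodule.span ℝ ({w} : Set V)) ≤ 1 := by
      by_cases hw : w = 0
      · have hb : (Submodule.span ℝ ({w} : Set V)) = ⊥ := by
          rw [hw]; exact Submodule.span_zero_singleton ℝ
        rw [hb]
        simp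
      · rw [finrank_span_singleton hw]
    omega
  have hge : 1 ≤ Module.finrank ℝ (Submodule.span ℝ ({v, w} : Set V)) := by
    have h1 : (ℝ ∙ v) ≤ Submodule.span ℝ ({v, w} : Set V) :=
      Submodule.span_mono (by simp)
    have := Submodule.finrank_mono h1
    rw [finrank_span_singleton hv] at this
    omega
  omega

/-- Any endomorphism of a nontrivial finite-dimensional real vector space has an
invariant subspace of dimension 1 or 2. -/
lemma aux_small_invariant (V : Type*) [AddCommGroup V] [Module ℝ V] [FiniteDimensional ℝ V]
    (hpos : 0 < Module.finrank ℝ V) (f : V →ₗ[ℝ] V) :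
    ∃ U : Submodule ℝ V, (∀ x ∈ U, f x ∈ U) ∧
      (Module.finrank ℝ U = 1 ∨ Module.finrank ℝ U = 2) := by
  have : Nontrivial V := Module.nontrivial_of_finrank_pos hpos
  have hint : IsIntegral ℝ f := LinearMap.isIntegral f
  have hmp0 : minpoly ℝ f ≠ 0 := minpoly.ne_zero hint
  have hmpd : 0 < (minpoly ℝ f).natDegree := minpoly.natDegree_pos hint
  obtain ⟨q, hq_irr, r, hqr⟩ := WfDvdMonoid.exists_irreducible_factor
    (not_isUnit_of_natDegree_pos _ hmpd) hmp0
  have hq0 : q ≠ 0 := hq_irr.ne_zero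
  have hr0 : r ≠ 0 := by rintro rfl; rw [mul_zero] at hqr; exact hmp0 hqr
  have hker : LinearMap.ker (aeval f q) ≠ ⊥ := by
    intro hbot
    have hinj : Function.Injective (aeval f q) := LinearMap.ker_eq_bot.1 hbot
    have hzero : aeval f r = 0 := by
      have h0 : aeval f (minpoly ℝ f) = 0 := minpoly.aeval ℝ f
      rw [hqr, map_mul] at h0
      ext x
      rw [LinearMap.zero_apply]
      refine hinj ?_
      rw [map_zero, ← Module.End.mul_apply, h0, LinearMap.zero_apply]
    have hdvd : minpoly ℝ f ∣ r := minpoly.dvd ℝ f hzero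
    have hle := Polynomial.natDegree_le_of_dvd hdvd hr0
    have hdeg : q.natDegree + r.natDegree = (minpoly ℝ f).natDegree := by
      rw [hqr, natDegree_mul hq0 hr0]
    have := hq_irr.natDegree_pos
    omega
  obtain ⟨v, hv, hv0⟩ := (Submodule.ne_bot_iff _).1 hker
  have hev : aeval f q v = 0 := LinearMap.mem_ker.1 hv
  have h2 := hq_irr.natDegree_le_two
  have h1 := hq_irr.natDegree_pos
  -- key: f (f v) lies in the span of v and f v
  have hffv : f (f v) ∈ Submodule.span ℝ ({v, f v} : Set V) := by
    rw [Polynomial.aeval_eq_sum_range] at hev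
    have hlc : q.coeff q.natDegree ≠ 0 := by
      rw [← leadingCoeff]
      exact leadingCoeff_ne_zero.2 hq0
    by_cases hq1 : q.natDegree = 1
    · rw [hq1] at hev hlc
      simp only [Finset.sum_range_succ, Finset.sum_range_zero, zero_add, pow_zero, pow_one,
        LinearMap.add_apply, LinearMap.smul_apply, Module.End.one_apply] at hev
      have h := eq_neg_of_add_eq_zero_right hev
      have hfv : f v = (q.coeff 1)⁻¹ • (-(q.coeff 0 • v)) := by
        rw [← h, smul_smul, inv_mul_cancel₀ hlc, one_smul]
      have heq : f (f v) = (q.coeff 1)⁻¹ • (-(q.coeff 0 • f v)) := by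
        conv_lhs => rw [hfv]
        rw [map_smul, map_neg, map_smul]
      rw [heq]
      refine Submodule.smul_mem _ _ (Submodule.neg_mem _ (Submodule.smul_mem _ _ ?_))
      exact Submodule.subset_span (by simp)
    · have hq2 : q.natDegree = 2 := by omega
      rw [hq2] at hev hlc
      simp only [Finset.sum_range_succ, Finset.sum_range_zero, zero_add, pow_zero, pow_one,
        LinearMap.add_apply, LinearMap.smul_apply, Module.End.one_apply] at hev
      have hf2 : (f ^ 2) v = f (f v) := by
        rw [pow_two, Module.End.mul_apply]
      rw [hf2] at hev
      have h := eq_neg_of_add_eq_zero_right hev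
      have hfv : f (f v) = (q.coeff 2)⁻¹ • (-(q.coeff 0 • v + q.coeff 1 • f v)) := by
        rw [← h, smul_smul, inv_mul_cancel₀ hlc, one_smul]
      rw [hfv]
      refine Submodule.smul_mem _ _ (Submodule.neg_mem _ (Submodule.add_mem _ ?_ ?_)) <;>
        exact Submodule.smul_mem _ _ (Submodule.subset_span (by simp))
  refine ⟨Submodule.span ℝ ({v, f v} : Set V), ?_, aux_span_pair_finrank v (f v) hv0⟩
  intro x hx
  have hmap : Submodule.map f (Submodule.span ℝ ({v, f v} : Set V)) ≤
      Submodule.span ℝ ({v, f v} : Set V) := by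
    rw [Submodule.map_span]
    refine Submodule.span_le.2 ?_
    rintro y ⟨z, hz, rfl⟩
    rcases hz with rfl | rfl
    · exact Submodule.subset_span (by simp)
    · exact hffv
  exact hmap ⟨x, hx, rfl⟩

/-- Pulling back a submodule of a quotient along the quotient map adds the dimension
of the subspace we quotient by. -/
lemma aux_finrank_comap_mkQ {V : Type*} [AddCommGroup V] [Module ℝ V] [FiniteDimensional ℝ V]
    (U : Submodule ℝ V) (Wbar : Submodule ℝ (V ⧸ U)) :
    Module.finrank ℝ (Wbar.comap U.mkQ) = Module.finrank ℝ Wbar + Module.finrank ℝ U := by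
  set W := Wbar.comap U.mkQ with hW
  have hUW : U ≤ W := by
    intro x hx
    simp only [hW, Submodule.mem_comap, Submodule.mkQ_apply]
    rw [Submodule.Quotient.mk_eq_zero U |>.2 hx]
    exact Wbar.zero_mem
  have hmem : ∀ x ∈ W, U.mkQ x ∈ Wbar := fun x hx => hx
  let g : W →ₗ[ℝ] Wbar := U.mkQ.restrict hmem
  have hsurj : Function.Surjective g := by
    rintro ⟨ybar, hy⟩
    obtain ⟨y, rfl⟩ := U.mkQ_surjective ybar
    exact ⟨⟨y, hy⟩, rfl⟩
  have hker : LinearMap.ker g = U.comap W.subtype := by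
    ext x
    simp only [LinearMap.mem_ker, Submodule.mem_comap, Submodule.subtype_apply]
    constructor
    · intro h
      have : U.mkQ (x : V) = 0 := congrArg Subtype.val h
      rwa [Submodule.mkQ_apply, Submodule.Quotient.mk_eq_zero] at this
    · intro h
      apply Subtype.ext
      show U.mkQ (x : V) = 0
      rwa [Submodule.mkQ_apply, Submodule.Quotient.mk_eq_zero]
  have hrn := LinearMap.finrank_range_add_finrank_ker g
  rw [LinearMap.range_eq_top.2 hsurj, finrank_top, hker] at hrn
  rw [(Submodule.comapSubtypeEquivOfLe hUW).finrank_eq] at hrn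
  exact hrn.symm


/-- Pull back an invariant subspace of the quotient to an invariant subspace. -/
lemma aux_pullback {V : Type*} [AddCommGroup V] [Module ℝ V] [FiniteDimensional ℝ V]
    (f : V →ₗ[ℝ] V) (U : Submodule ℝ V) (hU : U ≤ U.comap f)
    (Wbar : Submodule ℝ (V ⧸ U)) (hWbar : ∀ y ∈ Wbar, Submodule.mapQ U U f hU y ∈ Wbar) :
    ∃ W : Submodule ℝ V, (∀ x ∈ W, f x ∈ W) ∧
      Module.finrank ℝ W = Module.finrank ℝ Wbar + Module.finrank ℝ U := by
  refine ⟨Wbar.comap U.mkQ, ?_, aux_finrank_comap_mkQ U Wbar⟩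
  intro x hx
  have h1 : U.mkQ (f x) = (Submodule.mapQ U U f hU) (U.mkQ x) := by
    rw [Submodule.mkQ_apply, Submodule.mkQ_apply, Submodule.mapQ_apply]
  show U.mkQ (f x) ∈ Wbar
  rw [h1]
  exact hWbar _ hx

/-- The main induction. -/
lemma aux_key : ∀ (n : ℕ) (V : Type u) [AddCommGroup V] [Module ℝ V] [FiniteDimensional ℝ V],
    Module.finrank ℝ V = n → ∀ f : V →ₗ[ℝ] V, ∀ d : ℕ, d ≤ n → (Even d ∨ Odd n) →
    ∃ W : Submodule ℝ V, (∀ x ∈ W, f x ∈ W) ∧ Module.finrank ℝ W = d := by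
  intro n
  induction n using Nat.strong_induction_on with
  | _ n ih =>
    intro V _ _ _ hn f d hd hpar
    rcases eq_or_lt_of_le hd with rfl | hdn
    · exact ⟨⊤, fun x _ => Submodule.mem_top, by rw [finrank_top]; exact hn⟩
    rcases Nat.eq_zero_or_pos d with rfl | hd0
    · refine ⟨⊥, ?_, finrank_bot ℝ V⟩
      intro x hx
      rw [Submodule.mem_bot] at hx ⊢
      rw [hx, map_zero]
    by_cases hno : Odd n
    · by_cases hdo : Odd d
      · -- eigenline and quotient
        obtain ⟨μ, v, hv0, hfv⟩ := aux_eigen V (hn ▸ hno) f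
        set L : Submodule ℝ V := ℝ ∙ v with hLdef
        have hL : L ≤ L.comap f := by
          intro x hx
          rw [Submodule.mem_comap]
          rw [hLdef, Submodule.mem_span_singleton] at hx ⊢
          obtain ⟨a, rfl⟩ := hx
          exact ⟨a * μ, by rw [map_smul, hfv, smul_smul]⟩
        have hLr : Module.finrank ℝ L = 1 := finrank_span_singleton hv0
        have hq : Module.finrank ℝ (V ⧸ L) + Module.finrank ℝ L = Module.finrank ℝ V :=
          Submodule.finrank_quotient_add_finrank L
        have hqr : Module.finrank ℝ (V ⧸ L) = n - 1 := by omega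
        have hpar' : Even (d - 1) ∨ Odd (n - 1) := by
          left
          rw [Nat.odd_iff] at hdo
          rw [Nat.even_iff]
          omega
        obtain ⟨Wbar, hWinv, hWrank⟩ := ih (n - 1) (by omega) (V ⧸ L) hqr
          (Submodule.mapQ L L f hL) (d - 1) (by omega) hpar'
        obtain ⟨W, hW1, hW2⟩ := aux_pullback f L hL Wbar hWinv
        exact ⟨W, hW1, by omega⟩
      · -- d even: invariant hyperplane via the dual, then restrict
        have hdual : Odd (Module.finrank ℝ (Module.Dual ℝ V)) := by
          rw [Subspace.dual_finrank_eq, hn]; exact hno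
        obtain ⟨μ, φ, hφ0, hfφ⟩ := aux_eigen (Module.Dual ℝ V) hdual f.dualMap
        set H : Submodule ℝ V := LinearMap.ker φ with hHdef
        have hH : ∀ x ∈ H, f x ∈ H := by
          intro x hx
          rw [hHdef, LinearMap.mem_ker] at hx ⊢
          have h1 : (f.dualMap φ) x = (μ • φ) x := by rw [hfφ]
          rw [LinearMap.dualMap_apply] at h1
          rw [h1, LinearMap.smul_apply, hx, smul_zero]
        have hHr : Module.finrank ℝ H = n - 1 := by
          have hrn := LinearMap.finrank_range_add_finrank_ker φ
          have hrange : LinearMap.range φ = ⊤ := by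
            rcases eq_bot_or_eq_top (LinearMap.range φ) with hb | ht
            · exact absurd (LinearMap.range_eq_bot.1 hb) hφ0
            · exact ht
          rw [hrange, finrank_top, Module.finrank_self, ← hHdef] at hrn
          omega
        have hle1 : d ≤ n - 1 := by omega
        obtain ⟨W', hW'inv, hW'rank⟩ := ih (n - 1) (by omega) H hHr (f.restrict hH) d
          hle1 (Or.inl (Nat.not_odd_iff_even.1 hdo))
        refine ⟨W'.map H.subtype, ?_, ?_⟩
        · rintro x hx
          rw [Submodule.mem_map] at hx
          obtain ⟨y, hy, rfl⟩ := hx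
          rw [Submodule.mem_map]
          refine ⟨f.restrict hH y, hW'inv y hy, ?_⟩
          simp [LinearMap.restrict_apply]
        · rw [Submodule.finrank_map_subtype_eq]
          exact hW'rank
    · -- n even
      have hde : Even d := hpar.resolve_right hno
      obtain ⟨U, hUinv, hUrank⟩ := aux_small_invariant V (by omega) f
      have hUle : U ≤ U.comap f := fun x hx => hUinv x hx
      have hq : Module.finrank ℝ (V ⧸ U) + Module.finrank ℝ U = Module.finrank ℝ V :=
        Submodule.finrank_quotient_add_finrank U
      rcases hUrank with h1 | h2
      · have hqr : Module.finrank ℝ (V ⧸ U) = n - 1 := by omega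
        have hpar' : Even (d - 1) ∨ Odd (n - 1) := by
          right
          rw [Nat.odd_iff] at hno ⊢
          omega
        obtain ⟨Wbar, hWinv, hWrank⟩ := ih (n - 1) (by omega) (V ⧸ U) hqr
          (Submodule.mapQ U U f hUle) (d - 1) (by omega) hpar'
        obtain ⟨W, hW1, hW2⟩ := aux_pullback f U hUle Wbar hWinv
        exact ⟨W, hW1, by omega⟩
      · have hd2 : 2 ≤ d := by
          rw [Nat.even_iff] at hde
          omega
        have hdn2 : d ≤ n - 2 := by
          rw [Nat.even_iff] at hde
          rw [Nat.odd_iff] at hno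
          omega
        have hqr : Module.finrank ℝ (V ⧸ U) = n - 2 := by omega
        have hpar' : Even (d - 2) ∨ Odd (n - 2) := by
          left
          rw [Nat.even_iff] at hde ⊢
          omega
        obtain ⟨Wbar, hWinv, hWrank⟩ := ih (n - 2) (by omega) (V ⧸ U) hqr
          (Submodule.mapQ U U f hUle) (d - 2) (by omega) hpar'
        obtain ⟨W, hW1, hW2⟩ := aux_pullback f U hUle Wbar hWinv
        exact ⟨W, hW1, by omega⟩

/-- An endomorphism of a real vector space of odd finite dimension `n` has invariant
subspaces of every dimension `d < n`. -/
theorem stmt10 (V : Type*) [AddCommGroup V] [Module ℝ V] [FiniteDimensional ℝ V]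
    (hodd : Odd (Module.finrank ℝ V)) (f : V →ₗ[ℝ] V) :
    ∀ d : ℕ, d < Module.finrank ℝ V →
      ∃ W : Submodule ℝ V, (∀ x ∈ W, f x ∈ W) ∧ Module.finrank ℝ W = d := by
  intro d hd
  exact aux_key (Module.finrank ℝ V) V rfl f d (le_of_lt hd) (Or.inr hodd)
end

section
/- Let α : ℝ → ℝ be continuously differentiable with α(x) ≠ 0 for all x, let β, γ : ℝ → ℝ be continuous, and set δ(x) := β(x) − α′(x). Let U : ℝ → ℝ, and let θ : ℝ → ℝ be twice differentiable and satisfy α(θ(t))·θ″(t) + β(θ(t))·θ′(t)² + γ(θ(t)) = U(t) for all t. Fix θ₀, θ̇₀ ∈ ℝ, define ψ(a, b) := exp(−2·∫ₐᵇ δ(u)/α(u) du), and define I(t) := (1/2)·α(θ(t))²·θ′(t)² − ψ(θ₀, θ(t))·[(1/2)·α(θ₀)²·θ̇₀² − ∫_{θ₀}^{θ(t)} ψ(u, θ₀)·α(u)·γ(u) du]. Then I is differentiable and I′(t) = θ′(t)·(α(θ(t))·U(t) − 2·(δ(θ(t))/α(θ(t)))·I(t)) for all t. -/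
open intervalIntegral

/-- The integrating factor `ψ(a,b) = exp(−2·∫ₐᵇ δ(u)/α(u) du)` with `δ = β − α′`. -/
noncomputable def psiFactor (α β : ℝ → ℝ) (a b : ℝ) : ℝ :=
  Real.exp (-2 * ∫ u in a..b, (β u - deriv α u) / α u)

/-- The first-integral function `I` associated with the reduced dynamics
`α(θ)θ̈ + β(θ)θ̇² + γ(θ) = 0`. -/
noncomputable def firstIntegral (α β γ θ : ℝ → ℝ) (θ₀ θd₀ : ℝ) (t : ℝ) : ℝ :=
  (1 / 2) * α (θ t) ^ 2 * deriv θ t ^ 2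
    - psiFactor α β θ₀ (θ t) *
      ((1 / 2) * α θ₀ ^ 2 * θd₀ ^ 2 - ∫ u in θ₀..θ t, psiFactor α β u θ₀ * α u * γ u)

/-- Proposition (time derivative of the first integral): along any solution of
`α(θ)θ̈ + β(θ)θ̇² + γ(θ) = U`, the function `I` is differentiable with
`I′ = θ′·(α(θ)·U − 2·(δ(θ)/α(θ))·I)`, where `δ = β − α′`. -/
theorem stmt11 (α β γ U θ : ℝ → ℝ) (θ₀ θd₀ : ℝ)
    (hα : ContDiff ℝ 1 α) (hα0 : ∀ x, α x ≠ 0)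
    (hβ : Continuous β) (hγ : Continuous γ)
    (hθ : Differentiable ℝ θ) (hθ' : Differentiable ℝ (deriv θ))
    (hode : ∀ t, α (θ t) * deriv (deriv θ) t + β (θ t) * deriv θ t ^ 2 + γ (θ t) = U t) :
    ∀ t, HasDerivAt (firstIntegral α β γ θ θ₀ θd₀)
      (deriv θ t * (α (θ t) * U t
        - 2 * ((β (θ t) - deriv α (θ t)) / α (θ t)) * firstIntegral α β γ θ θ₀ θd₀ t)) t := by
  intro t
  set g : ℝ → ℝ := fun u => (β u - deriv α u) / α u with hgdef
  have hαc : Continuous α := hα.continuous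
  have hα' : Continuous (deriv α) := hα.continuous_deriv le_rfl
  have hg : Continuous g := (hβ.sub hα').div hαc hα0
  set F : ℝ → ℝ := fun b => ∫ u in θ₀..b, g u with hFdef
  have hF : ∀ x, HasDerivAt F (g x) x := fun x =>
    intervalIntegral.integral_hasDerivAt_right (hg.intervalIntegrable _ _)
      (hg.stronglyMeasurableAtFilter _ _) hg.continuousAt
  set h : ℝ → ℝ := fun u => (Real.exp (-2 * F u))⁻¹ * α u * γ u with hhdef
  have hFc : Continuous F := continuous_iff_continuousAt.mpr fun x => ((hF x).differentiableAt).continuousAt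
  have hh : Continuous h :=
    (((Real.continuous_exp.comp (continuous_const.mul hFc)).inv₀
      (fun x => Real.exp_ne_zero _)).mul hαc).mul hγ
  set G : ℝ → ℝ := fun b => ∫ u in θ₀..b, h u with hGdef
  have hG : ∀ x, HasDerivAt G (h x) x := fun x =>
    intervalIntegral.integral_hasDerivAt_right (hh.intervalIntegrable _ _)
      (hh.stronglyMeasurableAtFilter _ _) hh.continuousAt
  set C : ℝ := (1 / 2) * α θ₀ ^ 2 * θd₀ ^ 2 with hCdef
  -- rewrite firstIntegral in terms of F, G
  have hfun : firstIntegral α β γ θ θ₀ θd₀ = fun s =>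
      (1 / 2) * α (θ s) ^ 2 * deriv θ s ^ 2
        - Real.exp (-2 * F (θ s)) * (C - G (θ s)) := by
    funext s
    unfold firstIntegral psiFactor
    have hint : (∫ u in θ₀..θ s,
        Real.exp (-2 * ∫ v in u..θ₀, (β v - deriv α v) / α v) * α u * γ u)
        = G (θ s) := by
      refine intervalIntegral.integral_congr fun u _ => ?_
      have : (∫ v in u..θ₀, (β v - deriv α v) / α v) = -F u := by
        rw [hFdef]
        exact intervalIntegral.integral_symm θ₀ u
      rw [this, hhdef]
      simp [← Real.exp_neg]
    rw [hint, hFdef, hCdef]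
  rw [hfun]
  -- build the derivative
  have hθt : HasDerivAt θ (deriv θ t) t := (hθ t).hasDerivAt
  have hθ2 : HasDerivAt (deriv θ) (deriv (deriv θ) t) t := (hθ' t).hasDerivAt
  have hAt : HasDerivAt (fun s => α (θ s)) (deriv α (θ t) * deriv θ t) t :=
    ((hα.differentiable one_ne_zero (θ t)).hasDerivAt).comp t hθt
  have hFθ : HasDerivAt (fun s => F (θ s)) (g (θ t) * deriv θ t) t :=
    (hF (θ t)).comp t hθt
  have hGθ : HasDerivAt (fun s => G (θ s)) (h (θ t) * deriv θ t) t :=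
    (hG (θ t)).comp t hθt
  have hExp : HasDerivAt (fun s => Real.exp (-2 * F (θ s)))
      (Real.exp (-2 * F (θ t)) * (-2 * (g (θ t) * deriv θ t))) t :=
    (hFθ.const_mul (-2)).exp
  have h1 : HasDerivAt (fun s => (1 / 2) * α (θ s) ^ 2 * deriv θ s ^ 2)
      ((1 / 2) * (2 * α (θ t) ^ 1 * (deriv α (θ t) * deriv θ t)) * deriv θ t ^ 2
        + (1 / 2) * α (θ t) ^ 2 * (2 * deriv θ t ^ 1 * deriv (deriv θ) t)) t :=
    ((hAt.pow 2).const_mul (1 / 2)).mul (hθ2.pow 2)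
  have h2 : HasDerivAt (fun s => Real.exp (-2 * F (θ s)) * (C - G (θ s)))
      (Real.exp (-2 * F (θ t)) * (-2 * (g (θ t) * deriv θ t)) * (C - G (θ t))
        + Real.exp (-2 * F (θ t)) * (-(h (θ t) * deriv θ t))) t :=
    hExp.mul (hGθ.const_sub C)
  have htotal := h1.sub h2
  refine htotal.congr_deriv ?_
  -- algebraic identity
  rw [← hode t, hhdef, hgdef]
  have hne : α (θ t) ≠ 0 := hα0 (θ t)
  have he : Real.exp (-2 * F (θ t)) ≠ 0 := Real.exp_ne_zero _
  field_simp
  ring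
end

section
/- Let α : ℝ → ℝ be continuously differentiable with α(x) ≠ 0 for all x, let β, γ : ℝ → ℝ be continuous, and set δ(x) := β(x) − α′(x). Let θ : ℝ → ℝ be twice differentiable and satisfy the reduced dynamics α(θ(t))·θ″(t) + β(θ(t))·θ′(t)² + γ(θ(t)) = 0 for all t. Set θ₀ := θ(0) and θ̇₀ := θ′(0), define ψ(a, b) := exp(−2·∫ₐᵇ δ(u)/α(u) du), and define I(t) := (1/2)·α(θ(t))²·θ′(t)² − ψ(θ₀, θ(t))·[(1/2)·α(θ₀)²·θ̇₀² − ∫_{θ₀}^{θ(t)} ψ(u, θ₀)·α(u)·γ(u) du]. Then I(t) = 0 for all t; that is, I is a first integral that vanishes identically along every solution of the reduced dynamics starting from (θ₀, θ̇₀). -/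
open intervalIntegral

/-- The first integral `I` vanishes identically along every solution of the reduced
dynamics `α(θ)θ̈ + β(θ)θ̇² + γ(θ) = 0` starting from `(θ(0), θ′(0))`. -/
theorem stmt12 (α β γ θ : ℝ → ℝ)
    (hα : ContDiff ℝ 1 α) (hα0 : ∀ x, α x ≠ 0)
    (hβ : Continuous β) (hγ : Continuous γ)
    (hθ : Differentiable ℝ θ) (hθ' : Differentiable ℝ (deriv θ))
    (hode : ∀ t, α (θ t) * deriv (deriv θ) t + β (θ t) * deriv θ t ^ 2 + γ (θ t) = 0) :
    ∀ t, firstIntegral α β γ θ (θ 0) (deriv θ 0) t = 0 := by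
  have hαc : Continuous α := hα.continuous
  have hα' : Continuous (deriv α) := hα.continuous_deriv le_rfl
  have hdc : Continuous fun u => (β u - deriv α u) / α u :=
    (hβ.sub hα').div hαc (fun x => hα0 x)
  set θ₀ := θ 0 with hθ₀
  set F : ℝ → ℝ := fun x => ∫ u in θ₀..x, (β u - deriv α u) / α u with hF
  have hFd : ∀ x, HasDerivAt F ((β x - deriv α x) / α x) x := fun x =>
    integral_hasDerivAt_right (hdc.intervalIntegrable _ _)
      hdc.aestronglyMeasurable.stronglyMeasurableAtFilter hdc.continuousAt
  have hFc : Continuous F := by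
    have : Differentiable ℝ F := fun x => (hFd x).differentiableAt
    exact this.continuous
  set g : ℝ → ℝ := fun u => Real.exp (2 * F u) * (α u * γ u) with hg
  have hgc : Continuous g :=
    (Real.continuous_exp.comp (continuous_const.mul hFc)).mul (hαc.mul hγ)
  set G : ℝ → ℝ := fun x => ∫ u in θ₀..x, g u with hG
  have hGd : ∀ x, HasDerivAt G (g x) x := fun x =>
    integral_hasDerivAt_right (hgc.intervalIntegrable _ _)
      hgc.aestronglyMeasurable.stronglyMeasurableAtFilter hgc.continuousAt
  set E : ℝ → ℝ := fun s =>
    Real.exp (2 * F (θ s)) * ((1 / 2) * α (θ s) ^ 2 * deriv θ s ^ 2) + G (θ s) with hE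
  have hEderiv : ∀ t, HasDerivAt E 0 t := by
    intro t
    have hθt : HasDerivAt θ (deriv θ t) t := (hθ t).hasDerivAt
    have hθ't : HasDerivAt (deriv θ) (deriv (deriv θ) t) t := (hθ' t).hasDerivAt
    have hFθ : HasDerivAt (fun s => F (θ s))
        ((β (θ t) - deriv α (θ t)) / α (θ t) * deriv θ t) t :=
      (hFd (θ t)).comp t hθt
    have hexp : HasDerivAt (fun s => Real.exp (2 * F (θ s)))
        (Real.exp (2 * F (θ t)) * (2 * ((β (θ t) - deriv α (θ t)) / α (θ t) * deriv θ t))) t :=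
      (hFθ.const_mul 2).exp
    have hαθ : HasDerivAt (fun s => α (θ s)) (deriv α (θ t) * deriv θ t) t :=
      ((hα.differentiable one_ne_zero (θ t)).hasDerivAt).comp t hθt
    have hhalf : HasDerivAt (fun s => (1 / 2) * α (θ s) ^ 2 * deriv θ s ^ 2)
        (((1:ℝ) / 2 * (2 * α (θ t) ^ 1 * (deriv α (θ t) * deriv θ t))) * deriv θ t ^ 2
          + (1 / 2) * α (θ t) ^ 2 * (2 * deriv θ t ^ 1 * deriv (deriv θ) t)) t := by
      exact ((hαθ.pow 2).const_mul ((1:ℝ)/2)).mul (hθ't.pow 2)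
    have hGθ : HasDerivAt (fun s => G (θ s)) (g (θ t) * deriv θ t) t :=
      (hGd (θ t)).comp t hθt
    have hfull := (hexp.mul hhalf).add hGθ
    have hz : Real.exp (2 * F (θ t)) * (2 * ((β (θ t) - deriv α (θ t)) / α (θ t) * deriv θ t)) *
          ((1 / 2) * α (θ t) ^ 2 * deriv θ t ^ 2)
        + Real.exp (2 * F (θ t)) *
          (((1:ℝ) / 2 * (2 * α (θ t) ^ 1 * (deriv α (θ t) * deriv θ t))) * deriv θ t ^ 2
            + (1 / 2) * α (θ t) ^ 2 * (2 * deriv θ t ^ 1 * deriv (deriv θ) t))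
        + g (θ t) * deriv θ t = 0 := by
      have h := hode t
      have hne := hα0 (θ t)
      have key : deriv (deriv θ) t = -(β (θ t) * deriv θ t ^ 2 + γ (θ t)) / α (θ t) := by
        field_simp
        linear_combination h
      simp only [hg]
      rw [key]
      field_simp
      ring
    rw [← hz]
    exact hfull
  have hEconst : ∀ t, E t = E 0 := by
    intro t
    exact is_const_of_deriv_eq_zero (fun s => (hEderiv s).differentiableAt)
      (fun s => (hEderiv s).deriv) t 0
  have hE0 : E 0 = (1 / 2) * α θ₀ ^ 2 * deriv θ 0 ^ 2 := by
    simp only [hE, hF, hG, ← hθ₀, integral_same, mul_zero, Real.exp_zero, one_mul, add_zero]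
  intro t
  have hEt := (hEconst t).trans hE0
  have hpsi : psiFactor α β θ₀ (θ t) = Real.exp (-2 * F (θ t)) := rfl
  have hint : (∫ u in θ₀..θ t, psiFactor α β u θ₀ * α u * γ u) = G (θ t) := by
    simp only [hG]
    apply intervalIntegral.integral_congr
    intro u _
    have hps : psiFactor α β u θ₀ = Real.exp (2 * F u) := by
      simp only [psiFactor, hF]
      rw [intervalIntegral.integral_symm]
      congr 1
      ring
    show psiFactor α β u θ₀ * α u * γ u = g u
    rw [hps]
    simp only [hg]
    ring
  simp only [firstIntegral, hint, hpsi]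
  have hexpne : Real.exp (2 * F (θ t)) ≠ 0 := Real.exp_ne_zero _
  have hEt' : Real.exp (2 * F (θ t)) * ((1 / 2) * α (θ t) ^ 2 * deriv θ t ^ 2) + G (θ t)
      = (1 / 2) * α θ₀ ^ 2 * deriv θ 0 ^ 2 := hEt
  have h2 : G (θ t) = (1 / 2) * α θ₀ ^ 2 * deriv θ 0 ^ 2
      - Real.exp (2 * F (θ t)) * ((1 / 2) * α (θ t) ^ 2 * deriv θ t ^ 2) := by linarith
  rw [h2, show (-2 : ℝ) * F (θ t) = -(2 * F (θ t)) by ring, Real.exp_neg]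
  field_simp
  ring
end

section
/- Consider a mechanical system with n_q degrees of freedom and n_q − 1 controls: let M : ℝ^{n_q} → (real n_q×n_q matrices), G : ℝ^{n_q} → ℝ^{n_q}, let C : ℝ^{n_q} × ℝ^{n_q} → (real n_q×n_q matrices) be homogeneous of degree one in its second argument, i.e. C(q, c·v) = c·C(q, v) for all scalars c and vectors q, v, let B̂ be a real n_q×(n_q−1) matrix and let b⊥ ∈ ℝ^{n_q} be a vector with b⊥ᵀ·B̂ = 0 (a left annihilator of B̂). Let Φ : ℝ → ℝ^{n_q} be twice differentiable with derivative Φ′ and second derivative Φ″, let θ : ℝ → ℝ be twice differentiable, set q(t) := Φ(θ(t)), and suppose there is û : ℝ → ℝ^{n_q−1} such that M(q(t))·q̈(t) + C(q(t), q̇(t))·q̇(t) + G(q(t)) = B̂·û(t) holds for all t. Then θ satisfies the reduced dynamics α(θ(t))·θ″(t) + β(θ(t))·θ′(t)² + γ(θ(t)) = 0 for all t, where α(x) := b⊥ᵀ·M(Φ(x))·Φ′(x), β(x) := b⊥ᵀ·M(Φ(x))·Φ″(x) + b⊥ᵀ·C(Φ(x), Φ′(x))·Φ′(x), and γ(x)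 := b⊥ᵀ·G(Φ(x)). -/
open Matrix

/-- Reduced dynamics of an underactuated mechanical system with one degree of
underactuation under the virtual holonomic constraint `q = Φ(θ)`: if
`M(q)q̈ + C(q,q̇)q̇ + G(q) = B̂·û` holds along `q(t) = Φ(θ(t))` (with `q̇, q̈` given by
the chain rule) and `b⊥ᵀ·B̂ = 0`, then `α(θ)θ″ + β(θ)θ′² + γ(θ) = 0`, where
`α(x) = b⊥ᵀM(Φ(x))Φ′(x)`, `β(x) = b⊥ᵀM(Φ(x))Φ″(x) + b⊥ᵀC(Φ(x),Φ′(x))Φ′(x)` and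
`γ(x) = b⊥ᵀG(Φ(x))`. -/
theorem stmt13 {nq : ℕ}
    (M : (Fin nq → ℝ) → Matrix (Fin nq) (Fin nq) ℝ)
    (G : (Fin nq → ℝ) → (Fin nq → ℝ))
    (C : (Fin nq → ℝ) → (Fin nq → ℝ) → Matrix (Fin nq) (Fin nq) ℝ)
    (hChom : ∀ (c : ℝ) (q v : Fin nq → ℝ), C q (c • v) = c • C q v)
    (Bhat : Matrix (Fin nq) (Fin (nq - 1)) ℝ)
    (bperp : Fin nq → ℝ) (hann : Bhat.vecMul bperp = 0)
    (Φ : ℝ → Fin nq → ℝ) (hΦ : Differentiable ℝ Φ) (hΦ' : Differentiable ℝ (deriv Φ))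
    (θ : ℝ → ℝ) (hθ : Differentiable ℝ θ) (hθ' : Differentiable ℝ (deriv θ))
    (uhat : ℝ → Fin (nq - 1) → ℝ)
    (heom : ∀ t,
      (M (Φ (θ t))).mulVec
          (deriv (deriv θ) t • deriv Φ (θ t) + deriv θ t ^ 2 • deriv (deriv Φ) (θ t))
        + (C (Φ (θ t)) (deriv θ t • deriv Φ (θ t))).mulVec (deriv θ t • deriv Φ (θ t))
        + G (Φ (θ t)) = Bhat.mulVec (uhat t)) :
    ∀ t, (bperp ⬝ᵥ (M (Φ (θ t))).mulVec (deriv Φ (θ t))) * deriv (deriv θ) t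
        + (bperp ⬝ᵥ (M (Φ (θ t))).mulVec (deriv (deriv Φ) (θ t))
            + bperp ⬝ᵥ (C (Φ (θ t)) (deriv Φ (θ t))).mulVec (deriv Φ (θ t)))
          * deriv θ t ^ 2
        + bperp ⬝ᵥ G (Φ (θ t)) = 0 := by
  intro t
  have h := congrArg (fun v => bperp ⬝ᵥ v) (heom t)
  simp only [hChom, smul_mulVec, mulVec_smul, dotProduct_add, dotProduct_smul,
    mulVec_add, smul_eq_mul, dotProduct_mulVec, hann, zero_dotProduct] at h
  rw [dotProduct_mulVec (v := bperp), dotProduct_mulVec (v := bperp),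
    dotProduct_mulVec (v := bperp)]
  nlinarith [h]
end

section
/- For every invertible real n×n matrix M there exists a real n×n matrix F such that exp(F) = M·M. (Equivalently, the square of any real invertible matrix admits a real matrix logarithm; applied to the monodromy matrix of a linear T-periodic system, this yields the real matrix F of a real 2T-periodic Floquet–Lyapunov factorization.) -/
open NormedSpace Polynomial

noncomputable def aux_ratAlgC {A : Type*} [NormedRing A] [NormedAlgebra ℂ A] : NormedAlgebra ℚ A :=
  NormedAlgebra.restrictScalars ℚ ℂ A

noncomputable def aux_ratAlgR {A : Type*} [NormedRing A] [NormedAlgebra ℝ A] : NormedAlgebra ℚ A :=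
  NormedAlgebra.restrictScalars ℚ ℝ A

attribute [local instance] aux_ratAlgC aux_ratAlgR



section Aux
variable {A : Type*} [NormedRing A] [NormedAlgebra ℂ A] [CompleteSpace A]
    [FiniteDimensional ℂ A]

omit [FiniteDimensional ℂ A] in
lemma aux_exp_nhds_one : Set.range (exp : A → A) ∈ nhds (1 : A) := by
  have hd : HasStrictFDerivAt (exp)
      ((ContinuousLinearEquiv.refl ℂ A : A ≃L[ℂ] A) : A →L[ℂ] A) 0 := by
    exact (hasStrictFDerivAt_exp_zero (𝕂 := ℂ) (𝔸 := A))
  have hmap := hd.map_nhds_eq_of_equiv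
  rw [NormedSpace.exp_zero] at hmap
  rw [← hmap]
  exact Filter.mem_map.2 (Filter.univ_mem' fun a => Set.mem_range_self a)

omit [FiniteDimensional ℂ A] in
lemma aux_exp_open (hcomm : ∀ x y : A, Commute x y) :
    IsOpen (Set.range (exp : A → A)) := by
  rw [isOpen_iff_mem_nhds]
  rintro _ ⟨b, rfl⟩
  have hcont : Continuous fun y : A => exp (-b) * y := continuous_const.mul continuous_id
  have h1 : (fun y : A => exp (-b) * y) ⁻¹' Set.range (exp) ∈ nhds (exp b) := by
    refine hcont.continuousAt.preimage_mem_nhds ?_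
    have h0 : exp (-b) * exp b = 1 := by
      rw [← exp_add_of_commute (hcomm (-b) b)]; simp
    rw [h0]
    exact aux_exp_nhds_one
  refine Filter.mem_of_superset h1 ?_
  rintro y hy
  obtain ⟨c, hc⟩ := Set.mem_preimage.1 hy
  have hc' : exp c = exp (-b) * y := hc
  refine ⟨b + c, ?_⟩
  have hbb : exp b * exp (-b) = 1 := by
    rw [← exp_add_of_commute (hcomm b (-b))]; simp
  calc exp (b + c) = exp b * exp c := exp_add_of_commute (hcomm b c)
    _ = exp b * (exp (-b) * y) := by rw [hc']
    _ = (exp b * exp (-b)) * y := by rw [mul_assoc]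
    _ = y := by rw [hbb, one_mul]

omit [FiniteDimensional ℂ A] in
lemma aux_notexp_open (hcomm : ∀ x y : A, Commute x y) :
    IsOpen {x : A | IsUnit x ∧ x ∉ Set.range (exp : A → A)} := by
  rw [isOpen_iff_mem_nhds]
  rintro x ⟨hx, hxE⟩
  obtain ⟨v, rfl⟩ := hx
  have hcont : Continuous fun y : A => (↑v⁻¹ : A) * y := continuous_const.mul continuous_id
  have h1 : (fun y : A => (↑v⁻¹ : A) * y) ⁻¹' Set.range (exp) ∈ nhds (v : A) := by
    refine hcont.continuousAt.preimage_mem_nhds ?_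
    have h0 : (↑v⁻¹ : A) * v = 1 := v.inv_mul
    rw [h0]
    exact aux_exp_nhds_one
  refine Filter.mem_of_superset h1 ?_
  rintro y hy
  obtain ⟨c, hc⟩ := Set.mem_preimage.1 hy
  have hc' : exp c = (↑v⁻¹ : A) * y := hc
  have hy' : y = (v : A) * exp c := by
    rw [hc', ← mul_assoc, v.mul_inv, one_mul]
  constructor
  · rw [hy']
    exact v.isUnit.mul (isUnit_exp c)
  · rintro ⟨d, rfl⟩
    apply hxE
    refine ⟨d + (-c), ?_⟩
    have h2 : exp c * exp (-c) = 1 := by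
      rw [← exp_add_of_commute (hcomm c (-c))]; simp
    calc exp (d + (-c)) = exp d * exp (-c) := exp_add_of_commute (hcomm d (-c))
      _ = ((v : A) * exp c) * exp (-c) := by rw [← hy']
      _ = (v : A) * (exp c * exp (-c)) := by rw [mul_assoc]
      _ = v := by rw [h2, mul_one]

end Aux

section Aux2
variable {A : Type*} [NormedRing A] [NormedAlgebra ℂ A] [CompleteSpace A]
    [FiniteDimensional ℂ A]

lemma aux_det_ne_zero {x : A} (hx : IsUnit x) :
    LinearMap.det (LinearMap.mulLeft ℂ x) ≠ 0 := by
  obtain ⟨v, rfl⟩ := hx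
  have hunit : IsUnit (LinearMap.mulLeft ℂ (v : A)) := by
    refine ⟨⟨LinearMap.mulLeft ℂ (v : A), LinearMap.mulLeft ℂ (↑v⁻¹ : A), ?_, ?_⟩, rfl⟩
    · show LinearMap.mulLeft ℂ (v : A) ∘ₗ LinearMap.mulLeft ℂ (↑v⁻¹ : A) = LinearMap.id
      rw [← LinearMap.mulLeft_mul, v.mul_inv, LinearMap.mulLeft_one]
    · show LinearMap.mulLeft ℂ (↑v⁻¹ : A) ∘ₗ LinearMap.mulLeft ℂ (v : A) = LinearMap.id
      rw [← LinearMap.mulLeft_mul, v.inv_mul, LinearMap.mulLeft_one]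
  exact ((LinearMap.mulLeft ℂ (v : A)).isUnit_det hunit).ne_zero

lemma aux_unit_of_det (hcomm : ∀ x y : A, Commute x y) {x : A}
    (hd : LinearMap.det (LinearMap.mulLeft ℂ x) ≠ 0) : IsUnit x := by
  obtain ⟨y, hy⟩ := ((LinearMap.mulLeft ℂ x).equivOfDetNeZero hd).surjective 1
  have hy' : x * y = 1 := hy
  have hy'' : y * x = 1 := (hcomm y x).eq.trans hy'
  exact ⟨⟨x, y, hy', hy''⟩, rfl⟩

end Aux2


section Aux3
variable {A : Type*} [NormedRing A] [NormedAlgebra ℂ A] [CompleteSpace A]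
    [FiniteDimensional ℂ A]


lemma aux_mulLeft_line (u : A) (z : ℂ) :
    LinearMap.mulLeft ℂ (u + z • (1 - u)) =
      LinearMap.mulLeft ℂ u + z • LinearMap.mulLeft ℂ (1 - u) := by
  ext y
  simp [LinearMap.mulLeft_apply, add_mul, smul_mul_assoc]

lemma aux_finite_nonunit (hcomm : ∀ x y : A, Commute x y) {u : A} (hu : IsUnit u) :
    {z : ℂ | ¬ IsUnit (u + z • (1 - u))}.Finite := by
  classical
  set b := Module.finBasis ℂ A
  set A0 := LinearMap.toMatrix b b (LinearMap.mulLeft ℂ u) with hA0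
  set A1 := LinearMap.toMatrix b b (LinearMap.mulLeft ℂ (1 - u)) with hA1
  set Pm : Matrix _ _ ℂ[X] := A0.map C + (X : ℂ[X]) • A1.map C with hPm
  set p : ℂ[X] := Pm.det with hp
  have hEval : ∀ z : ℂ, p.eval z =
      LinearMap.det (LinearMap.mulLeft ℂ (u + z • (1 - u))) := by
    intro z
    have h1 : p.eval z = (Pm.map (evalRingHom z)).det := by
      rw [hp]
      rw [show eval z Pm.det = (evalRingHom z) Pm.det from rfl, RingHom.map_det,
        RingHom.mapMatrix_apply]
    have h2 : Pm.map (evalRingHom z) = A0 + z • A1 := by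
      ext i j
      simp [hPm, Matrix.map_apply, Matrix.add_apply, Matrix.smul_apply, smul_eq_mul]
      ring
    rw [h1, h2, aux_mulLeft_line, ← LinearMap.det_toMatrix b, map_add, map_smul, ← hA0, ← hA1]
  have hp0 : p ≠ 0 := by
    intro h
    have h1 : p.eval 1 = 1 := by
      rw [hEval 1]
      have : u + (1 : ℂ) • (1 - u) = 1 := by rw [one_smul]; abel
      rw [this, LinearMap.mulLeft_one, LinearMap.det_id]
    rw [h] at h1
    simp at h1
  refine (p.finite_setOf_isRoot hp0).subset ?_
  intro z hz
  simp only [Set.mem_setOf_eq] at hz ⊢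
  show p.IsRoot z
  by_contra hroot
  exact hz (aux_unit_of_det hcomm (by rw [← hEval z]; exact hroot))

end Aux3

section Main
variable {A : Type*} [NormedRing A] [NormedAlgebra ℂ A] [CompleteSpace A]
    [FiniteDimensional ℂ A]

/-- In a finite-dimensional commutative Banach `ℂ`-algebra, every unit is an exponential. -/
lemma aux_exp_unit (hcomm : ∀ x y : A, Commute x y) {u : A} (hu : IsUnit u) :
    ∃ b : A, exp b = u := by
  classical
  by_contra hne
  push_neg at hne
  have huE : u ∉ Set.range (exp : A → A) := by
    rintro ⟨b, hb⟩; exact hne b hb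
  set f : ℂ → A := fun z => u + z • (1 - u) with hf
  have hfc : Continuous f := continuous_const.add (continuous_id.smul continuous_const)
  set N : Set ℂ := {z : ℂ | ¬ IsUnit (u + z • (1 - u))} with hN
  have hNfin : N.Finite := aux_finite_nonunit hcomm hu
  have hconn : IsPreconnected Nᶜ := by
    have h2 : 1 < Module.rank ℝ ℂ := by rw [Complex.rank_real_complex]; norm_num
    exact (hNfin.countable.isPathConnected_compl_of_one_lt_rank h2).isConnected.isPreconnected
  set U : Set ℂ := f ⁻¹' (Set.range (exp : A → A)) with hU
  set W : Set ℂ := f ⁻¹' {x : A | IsUnit x ∧ x ∉ Set.range (exp : A → A)} with hW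
  have hUo : IsOpen U := (aux_exp_open hcomm).preimage hfc
  have hWo : IsOpen W := (aux_notexp_open hcomm).preimage hfc
  have hcover : Nᶜ ⊆ U ∪ W := by
    intro z hz
    simp only [hN, Set.mem_compl_iff, Set.mem_setOf_eq, not_not] at hz
    by_cases hzE : f z ∈ Set.range (exp : A → A)
    · exact Or.inl hzE
    · exact Or.inr ⟨hz, hzE⟩
  have hf1 : f 1 = 1 := by rw [hf]; simp only [one_smul]; abel
  have hf0 : f 0 = u := by rw [hf]; simp
  have h1U : (1 : ℂ) ∈ Nᶜ ∩ U := by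
    constructor
    · simp only [hN, Set.mem_compl_iff, Set.mem_setOf_eq, not_not]
      have : u + (1 : ℂ) • (1 - u) = 1 := by simp only [one_smul]; abel
      rw [this]; exact isUnit_one
    · show f 1 ∈ Set.range (exp : A → A)
      rw [hf1]
      exact ⟨0, NormedSpace.exp_zero⟩
  have h0W : (0 : ℂ) ∈ Nᶜ ∩ W := by
    constructor
    · simp only [hN, Set.mem_compl_iff, Set.mem_setOf_eq, not_not]
      simpa using hu
    · show f 0 ∈ {x : A | IsUnit x ∧ x ∉ Set.range (exp : A → A)}
      rw [hf0]
      exact ⟨hu, huE⟩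
  obtain ⟨z, hz⟩ := hconn U W hUo hWo hcover ⟨1, h1U⟩ ⟨0, h0W⟩
  exact hz.2.2.2 hz.2.1

end Main

/-- The square of any invertible real matrix admits a real matrix logarithm:
there is a real matrix `F` with `exp(F) = M·M`. -/
theorem stmt14 {n : ℕ} (M : Matrix (Fin n) (Fin n) ℝ) (hM : IsUnit M) :
    ∃ F : Matrix (Fin n) (Fin n) ℝ, NormedSpace.exp F = M * M := by
  classical
  letI : SeminormedRing (Matrix (Fin n) (Fin n) ℂ) := Matrix.linftyOpSemiNormedRing
  letI : NormedRing (Matrix (Fin n) (Fin n) ℂ) := Matrix.linftyOpNormedRing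
  letI : NormedAlgebra ℂ (Matrix (Fin n) (Fin n) ℂ) := Matrix.linftyOpNormedAlgebra
  letI : NormedAlgebra ℝ (Matrix (Fin n) (Fin n) ℂ) := Matrix.linftyOpNormedAlgebra
  letI : SeminormedRing (Matrix (Fin n) (Fin n) ℝ) := Matrix.linftyOpSemiNormedRing
  letI : NormedRing (Matrix (Fin n) (Fin n) ℝ) := Matrix.linftyOpNormedRing
  letI : NormedAlgebra ℝ (Matrix (Fin n) (Fin n) ℝ) := Matrix.linftyOpNormedAlgebra
  set ρ : Matrix (Fin n) (Fin n) ℝ →+* Matrix (Fin n) (Fin n) ℂ :=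
    (algebraMap ℝ ℂ : ℝ →+* ℂ).mapMatrix with hρ
  set Mc : Matrix (Fin n) (Fin n) ℂ := ρ M with hMc
  have hMcu : IsUnit Mc := hM.map ρ
  set B : Subalgebra ℂ (Matrix (Fin n) (Fin n) ℂ) := Algebra.adjoin ℂ {Mc} with hB
  have hMcB : Mc ∈ B := Algebra.self_mem_adjoin_singleton ℂ Mc
  letI : FiniteDimensional ℂ ↥B := inferInstance
  letI : CompleteSpace ↥B := @FiniteDimensional.complete ℂ ↥B _ _ _ _ _
    (B.toSubring.toAddSubgroup.isUniformAddGroup) _ _ _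
  -- commutativity of B
  have hcomm : ∀ x y : ↥B, Commute x y := by
    intro x y
    have h1 : Commute (x : Matrix (Fin n) (Fin n) ℂ) (y : Matrix (Fin n) (Fin n) ℂ) := by
      refine Algebra.commute_of_mem_adjoin_of_forall_mem_commute y.2 ?_
      intro c hc
      rw [Set.mem_singleton_iff] at hc
      subst hc
      exact (Algebra.commute_of_mem_adjoin_self x.2).symm
    exact Subtype.ext h1.eq
  -- `Mc` is a unit of `B` (inverse via Cayley–Hamilton)
  have hdet : Mc.det ≠ 0 := by
    have h1 : IsUnit Mc.det := (Matrix.isUnit_iff_isUnit_det Mc).1 hMcu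
    exact h1.ne_zero
  have hc0 : Mc.charpoly.coeff 0 ≠ 0 := by
    intro h
    apply hdet
    rw [Matrix.det_eq_sign_charpoly_coeff, h, mul_zero]
  have haeval : Mc * Polynomial.aeval Mc Mc.charpoly.divX +
      (algebraMap ℂ _) (Mc.charpoly.coeff 0) = 0 := by
    have h1 : (Polynomial.aeval Mc) (Polynomial.X * Mc.charpoly.divX +
        Polynomial.C (Mc.charpoly.coeff 0)) = 0 := by
      rw [Mc.charpoly.X_mul_divX_add]
      exact Mc.aeval_self_charpoly
    rw [map_add, map_mul, Polynomial.aeval_X, Polynomial.aeval_C] at h1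
    exact h1
  set y : Matrix (Fin n) (Fin n) ℂ :=
    (-(Mc.charpoly.coeff 0))⁻¹ • Polynomial.aeval Mc Mc.charpoly.divX with hy
  have hMcy : Mc * y = 1 := by
    rw [hy, Matrix.mul_smul]
    have h2 : Mc * Polynomial.aeval Mc Mc.charpoly.divX =
        (algebraMap ℂ _) (-(Mc.charpoly.coeff 0)) := by
      rw [map_neg, eq_neg_iff_add_eq_zero]
      exact haeval
    rw [h2, Algebra.smul_def, ← map_mul, inv_mul_cancel₀ (by simpa using hc0), map_one]
  have hyB : y ∈ B := by
    refine Subalgebra.smul_mem _ ?_ _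
    rw [hB, Algebra.adjoin_singleton_eq_range_aeval]
    exact ⟨Mc.charpoly.divX, rfl⟩
  have hub : IsUnit (⟨Mc, hMcB⟩ : ↥B) := by
    have hyMc : y * Mc = 1 := by
      have h3 : Commute y Mc := by
        refine Algebra.commute_of_mem_adjoin_of_forall_mem_commute hMcB ?_
        intro c hc
        rw [Set.mem_singleton_iff] at hc
        subst hc
        exact (Algebra.commute_of_mem_adjoin_self hyB).symm
      exact h3.eq.trans hMcy
    exact ⟨⟨⟨Mc, hMcB⟩, ⟨y, hyB⟩, Subtype.ext hMcy, Subtype.ext hyMc⟩, rfl⟩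
  -- complex logarithm of `Mc` inside `B`
  obtain ⟨b, hb⟩ := aux_exp_unit hcomm hub
  have hbval : exp (b : Matrix (Fin n) (Fin n) ℂ) = Mc := by
    have h1 := map_exp (B.val) continuous_subtype_val b
    rw [hb] at h1
    exact h1.symm
  -- the entrywise-conjugation ring homomorphism
  set σ : Matrix (Fin n) (Fin n) ℂ →+* Matrix (Fin n) (Fin n) ℂ :=
    (starRingEnd ℂ).mapMatrix with hσ
  have hσcont : Continuous σ := by
    have : Continuous fun X : Matrix (Fin n) (Fin n) ℂ =>
        X.map (starRingEnd ℂ) := by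
      exact Continuous.matrix_map continuous_id Complex.continuous_conj
    exact this
  have hσMc : σ Mc = Mc := by
    ext i j
    simp [hσ, hρ, hMc, RingHom.mapMatrix_apply, Matrix.map_apply, Complex.conj_ofReal]
  set c : Matrix (Fin n) (Fin n) ℂ := (b : Matrix (Fin n) (Fin n) ℂ) with hc
  set cc : Matrix (Fin n) (Fin n) ℂ := σ c with hcc
  have hccexp : exp cc = Mc := by
    rw [hcc, show exp (σ c) = σ (exp c) from (map_exp σ hσcont c).symm, hbval, hσMc]
  -- `cc` is also a polynomial in `Mc`, hence lies in `B`
  obtain ⟨pc, hpc⟩ : ∃ p : Polynomial ℂ, Polynomial.aeval Mc p = c := by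
    have h2 : c ∈ (Algebra.adjoin ℂ {Mc} : Subalgebra ℂ (Matrix (Fin n) (Fin n) ℂ)) := b.2
    rw [Algebra.adjoin_singleton_eq_range_aeval] at h2
    exact h2
  have hcomp : σ.comp (algebraMap ℂ (Matrix (Fin n) (Fin n) ℂ)) =
      (algebraMap ℂ (Matrix (Fin n) (Fin n) ℂ)).comp (starRingEnd ℂ) := by
    refine RingHom.ext fun z => ?_
    ext i j
    simp only [hσ, RingHom.mapMatrix_apply, RingHom.coe_comp, Function.comp_apply,
      Matrix.map_apply, Matrix.algebraMap_matrix_apply]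
    rw [apply_ite (starRingEnd ℂ)]
    simp
  have hccB : cc ∈ B := by
    show cc ∈ Algebra.adjoin ℂ {Mc}
    rw [Algebra.adjoin_singleton_eq_range_aeval]
    refine ⟨pc.map (starRingEnd ℂ), ?_⟩
    show Polynomial.aeval Mc (pc.map (starRingEnd ℂ)) = cc
    rw [Polynomial.aeval_def, Polynomial.eval₂_map, ← hcomp, ← hσMc,
      ← Polynomial.hom_eval₂, ← Polynomial.aeval_def, hpc]
  have hcommccc : Commute c cc := by
    refine Algebra.commute_of_mem_adjoin_of_forall_mem_commute hccB ?_
    intro d hd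
    rw [Set.mem_singleton_iff] at hd
    subst hd
    exact (Algebra.commute_of_mem_adjoin_self b.2).symm
  have hexpsum : exp (c + cc) = Mc * Mc := by
    rw [show exp (c + cc) = exp c * exp cc from exp_add_of_commute hcommccc, hbval, hccexp]
  -- `c + cc` is conjugation-invariant, hence real
  have hσsum : σ (c + cc) = c + cc := by
    have hσσ : σ cc = c := by
      rw [hcc]
      ext i j
      simp [hσ, RingHom.mapMatrix_apply, Matrix.map_apply]
    rw [map_add, hσσ, ← hcc, add_comm]
  set F : Matrix (Fin n) (Fin n) ℝ :=
    Matrix.of fun i j => ((c + cc) i j).re with hF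
  have hρF : ρ F = c + cc := by
    ext i j
    have h1 : (starRingEnd ℂ) ((c + cc) i j) = (c + cc) i j := by
      have := congrArg (fun X => X i j) hσsum
      simpa [hσ, RingHom.mapMatrix_apply, Matrix.map_apply] using this
    have h2 := Complex.conj_eq_iff_re.mp h1
    simp only [hρ, hF, RingHom.mapMatrix_apply, Matrix.map_apply, Matrix.of_apply,
      Complex.coe_algebraMap]
    apply Complex.ext
    · simp
    · have h3 := congrArg Complex.im h1
      rw [Complex.conj_im] at h3
      have him : ((c + cc) i j).im = 0 := by linarith
      rw [Complex.ofReal_im, him]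
  refine ⟨F, ?_⟩
  have hinj : Function.Injective ρ := by
    intro X Y h
    ext i j
    have := congrArg (fun Z => Z i j) h
    simpa [hρ, RingHom.mapMatrix_apply, Matrix.map_apply] using this
  apply hinj
  have h1 : ρ (exp F) = exp (ρ F) := map_exp ρ (by
    have : Continuous fun X : Matrix (Fin n) (Fin n) ℝ =>
        X.map (algebraMap ℝ ℂ) := Continuous.matrix_map continuous_id Complex.continuous_ofReal
    exact this) F
  rw [h1, hρF, map_mul, ← hMc,
    hexpsum]
end

section
/- Let a, g ∈ ℝ and let θ : ℝ → ℝ be twice differentiable and satisfy, for all t, the reduced cart-pendulum dynamics (1 − a·cos²(θ(t)))·θ″(t) + a·cos(θ(t))·sin(θ(t))·θ′(t)² − g·sin(θ(t)) = 0. Then for all t, (1/2)·(1 − a·cos²(θ(t)))·[(1 − a·cos²(θ(t)))·θ′(t)² − (1 − a·cos²(θ(0)))·θ′(0)² + 2·g·(cos(θ(t)) − cos(θ(0)))] = 0; in particular the quantity (1 − a·cos²(θ(t)))·θ′(t)² + 2·g·cos(θ(t)) is constant along solutions. -/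
open Real

/-- First integral of the reduced cart-pendulum dynamics
`(1 − a·cos²θ)θ″ + a·cosθ·sinθ·θ′² − g·sinθ = 0`: the quantity
`(1 − a·cos²θ)θ′² + 2g·cosθ` is constant along solutions, and the associated
function `I` vanishes identically. -/
theorem stmt15 (a g : ℝ) (θ : ℝ → ℝ)
    (hθ : Differentiable ℝ θ) (hθ' : Differentiable ℝ (deriv θ))
    (hode : ∀ t, (1 - a * cos (θ t) ^ 2) * deriv (deriv θ) t
      + a * cos (θ t) * sin (θ t) * deriv θ t ^ 2 - g * sin (θ t) = 0) :
    (∀ t, (1 / 2) * (1 - a * cos (θ t) ^ 2) *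
        ((1 - a * cos (θ t) ^ 2) * deriv θ t ^ 2
          - (1 - a * cos (θ 0) ^ 2) * deriv θ 0 ^ 2
          + 2 * g * (cos (θ t) - cos (θ 0))) = 0) ∧
    (∀ t, (1 - a * cos (θ t) ^ 2) * deriv θ t ^ 2 + 2 * g * cos (θ t)
        = (1 - a * cos (θ 0) ^ 2) * deriv θ 0 ^ 2 + 2 * g * cos (θ 0)) := by
  have key : ∀ t, HasDerivAt
      (fun t => (1 - a * cos (θ t) ^ 2) * deriv θ t ^ 2 + 2 * g * cos (θ t)) 0 t := by
    intro t
    have h1 : HasDerivAt θ (deriv θ t) t := (hθ t).hasDerivAt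
    have h2 : HasDerivAt (deriv θ) (deriv (deriv θ) t) t := (hθ' t).hasDerivAt
    have H := ((((h1.cos.pow 2).const_mul a).const_sub 1).mul (h2.pow 2)).add
      (h1.cos.const_mul (2 * g))
    refine H.congr_deriv ?_
    have h := hode t
    push_cast
    simp only [Pi.pow_apply]
    linear_combination (2 * deriv θ t) * h
  have hconst : ∀ t, (1 - a * cos (θ t) ^ 2) * deriv θ t ^ 2 + 2 * g * cos (θ t)
      = (1 - a * cos (θ 0) ^ 2) * deriv θ 0 ^ 2 + 2 * g * cos (θ 0) := fun t =>
    is_const_of_deriv_eq_zero (fun x => (key x).differentiableAt)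
      (fun x => (key x).deriv) t 0
  exact ⟨fun t => by linear_combination (1/2) * (1 - a * cos (θ t)^2) * hconst t, hconst⟩
end

section
/- Let a, g ∈ ℝ and let θ : ℝ → ℝ be twice differentiable satisfying, for all t, (1 − a·cos²(θ(t)))·θ″(t) + a·cos(θ(t))·sin(θ(t))·θ′(t)² − g·sin(θ(t)) = 0. Define x_c(t) := −a·sin(θ(t)), φ(t) := θ(t) and u_f(t) := (1 − 2a)·cos(θ(t))·θ″(t) + (2a − 1)·sin(θ(t))·θ′(t)². Then the pair (x_c, φ) satisfies the nominal cart-pendulum equations of motion: 2·x_c″(t) + cos(φ(t))·φ″(t) − sin(φ(t))·φ′(t)² = u_f(t) and φ″(t) + cos(φ(t))·x_c″(t) − g·sin(φ(t)) = 0 for all t. -/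
open Real

/-- Any solution of the reduced dynamics of the cart-pendulum, together with the
virtual constraint `x_c = −a·sin(θ)`, `φ = θ`, and the nominal input
`u_f = (1−2a)·cos(θ)·θ″ + (2a−1)·sin(θ)·θ′²`, satisfies the nominal cart-pendulum
equations of motion. -/
theorem stmt16 (a g : ℝ) (θ : ℝ → ℝ)
    (hθ : Differentiable ℝ θ) (hθ' : Differentiable ℝ (deriv θ))
    (hode : ∀ t, (1 - a * cos (θ t) ^ 2) * deriv (deriv θ) t
      + a * cos (θ t) * sin (θ t) * deriv θ t ^ 2 - g * sin (θ t) = 0) :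
    ∀ t,
      (2 * deriv (deriv (fun τ => -a * sin (θ τ))) t
          + cos (θ t) * deriv (deriv θ) t - sin (θ t) * deriv θ t ^ 2
        = (1 - 2 * a) * cos (θ t) * deriv (deriv θ) t
          + (2 * a - 1) * sin (θ t) * deriv θ t ^ 2) ∧
      (deriv (deriv θ) t + cos (θ t) * deriv (deriv (fun τ => -a * sin (θ τ))) t
          - g * sin (θ t) = 0) := by
  have h1 : deriv (fun τ => -a * sin (θ τ)) = fun t => -a * (cos (θ t) * deriv θ t) := by
    funext t
    have : HasDerivAt (fun τ => -a * sin (θ τ)) (-a * (cos (θ t) * deriv θ t)) t := by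
      exact (((hθ t).hasDerivAt.sin)).const_mul (-a)
    exact this.deriv
  have h2 : ∀ t, deriv (deriv (fun τ => -a * sin (θ τ))) t
      = -a * ((-sin (θ t) * deriv θ t) * deriv θ t + cos (θ t) * deriv (deriv θ) t) := by
    intro t
    rw [h1]
    have hc : HasDerivAt (fun τ => cos (θ τ)) (-sin (θ t) * deriv θ t) t :=
      (hθ t).hasDerivAt.cos
    have : HasDerivAt (fun τ => -a * (cos (θ τ) * deriv θ τ))
        (-a * ((-sin (θ t) * deriv θ t) * deriv θ t + cos (θ t) * deriv (deriv θ) t)) t :=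
      (hc.mul (hθ' t).hasDerivAt).const_mul (-a)
    exact this.deriv
  intro t
  have h := hode t
  constructor
  · rw [h2 t]; ring
  · rw [h2 t]; nlinarith [h]
end

section
/- Let a, g ∈ ℝ and let x_c, φ : ℝ → ℝ be twice differentiable functions satisfying, for all t, the nominal cart-pendulum equations 2·x_c″(t) + cos(φ(t))·φ″(t) − sin(φ(t))·φ′(t)² = u_f(t) and φ″(t) + cos(φ(t))·x_c″(t) − g·sin(φ(t)) = 0, where the input is given by the feedback transformation u_f(t) = [sin(φ(t))·(2a − 1)/(1 − a·cos²(φ(t)))]·(φ′(t)² − g·cos(φ(t))) + [(1 + sin²(φ(t)))/(1 − a·cos²(φ(t)))]·u(t) for some function u : ℝ → ℝ, and assume 1 − a·cos²(φ(t)) ≠ 0 for all t. Then the function y(t) := x_c(t) + a·sin(φ(t)) satisfies y″(t) = u(t) for all t; that is, the feedback transformation is partially feedback linearizing. -/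
open Real

/-- Partial feedback linearization of the cart-pendulum: under the nominal equations
of motion with the feedback-transformed input `u_f`, the transverse coordinate
`y = x_c + a·sin(φ)` satisfies `y″ = u`. -/
theorem stmt17 (a g : ℝ) (xc φ u : ℝ → ℝ)
    (hxc : Differentiable ℝ xc) (hxc' : Differentiable ℝ (deriv xc))
    (hφ : Differentiable ℝ φ) (hφ' : Differentiable ℝ (deriv φ))
    (hden : ∀ t, 1 - a * cos (φ t) ^ 2 ≠ 0)
    (heom1 : ∀ t, 2 * deriv (deriv xc) t + cos (φ t) * deriv (deriv φ) t
      - sin (φ t) * deriv φ t ^ 2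
      = (sin (φ t) * (2 * a - 1) / (1 - a * cos (φ t) ^ 2))
          * (deriv φ t ^ 2 - g * cos (φ t))
        + ((1 + sin (φ t) ^ 2) / (1 - a * cos (φ t) ^ 2)) * u t)
    (heom2 : ∀ t, deriv (deriv φ) t + cos (φ t) * deriv (deriv xc) t
      - g * sin (φ t) = 0) :
    ∀ t, deriv (deriv (fun τ => xc τ + a * sin (φ τ))) t = u t := by
  intro t
  have h1 : deriv (fun τ => xc τ + a * sin (φ τ))
      = fun s => deriv xc s + a * (cos (φ s) * deriv φ s) := by
    funext s
    have hds : DifferentiableAt ℝ (fun τ => sin (φ τ)) s :=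
      (Real.differentiable_sin.comp hφ).differentiableAt
    rw [deriv_fun_add (hxc s) (hds.const_mul a), deriv_const_mul _ hds]
    congr 1
    rw [show (fun τ => sin (φ τ)) = Real.sin ∘ φ from rfl,
      deriv_comp _ Real.differentiable_sin.differentiableAt (hφ s), Real.deriv_sin]
  rw [h1]
  have hcos : Differentiable ℝ (fun s => cos (φ s)) := Real.differentiable_cos.comp hφ
  have h2 : deriv (fun s => deriv xc s + a * (cos (φ s) * deriv φ s)) t
      = deriv (deriv xc) t + a * (-sin (φ t) * deriv φ t * deriv φ t
          + cos (φ t) * deriv (deriv φ) t) := by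
    rw [deriv_fun_add (g := fun s => a * (cos (φ s) * deriv φ s)) (hxc' t) (((differentiable_const a).mul (hcos.mul hφ')).differentiableAt),
      deriv_const_mul (d := fun s => cos (φ s) * deriv φ s) _ ((hcos.mul hφ').differentiableAt),
      deriv_fun_mul (hcos t) (hφ' t)]
    congr 2
    rw [show (fun s => cos (φ s)) = Real.cos ∘ φ from rfl,
      deriv_comp _ Real.differentiable_cos.differentiableAt (hφ t), Real.deriv_cos]
  rw [h2]
  have e1 := heom1 t
  have e2 := heom2 t
  have hd := hden t
  have hpy : sin (φ t) ^ 2 = 1 - cos (φ t) ^ 2 := by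
    have := sin_sq_add_cos_sq (φ t); linarith
  field_simp at e1
  rw [eq_div_iff (by intro h; apply hd; linarith)] at e1
  have hP : deriv (deriv φ) t = g * sin (φ t) - cos (φ t) * deriv (deriv xc) t := by
    linarith
  rw [hP] at e1 ⊢
  have hS : (1 : ℝ) + sin (φ t) ^ 2 ≠ 0 := by positivity
  have key : (1 + sin (φ t) ^ 2) * (deriv (deriv xc) t * (1 - a * cos (φ t) ^ 2))
      = (1 + sin (φ t) ^ 2)
        * (a * sin (φ t) * (deriv φ t ^ 2 - g * cos (φ t)) + u t) := by
    linear_combination e1 + (deriv (deriv xc) t * (1 - a * cos (φ t) ^ 2)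
      + a * sin (φ t) * (g * cos (φ t) - deriv φ t ^ 2)) * hpy
  have key2 := mul_left_cancel₀ hS key
  linear_combination key2
end

section
/- Let ρ : ℝ → ℝ, let A, Q : ℝ → (real n×n matrices), B : ℝ → (real n×m matrices) and Γ : ℝ → (real m×m matrices) with each Γ(x) symmetric and invertible, and let R : ℝ → (real n×n matrices) be differentiable with each R(x) symmetric, satisfying the periodic Riccati differential equation ρ(x)·R′(x) + A(x)ᵀ·R(x) + R(x)·A(x) + Q(x) − R(x)·B(x)·Γ(x)⁻¹·B(x)ᵀ·R(x) = 0 for all x. Let s : ℝ → ℝ be differentiable with s′(t) = ρ(s(t)), and let x : ℝ → ℝⁿ be differentiable with x′(t) = (A(s(t)) − B(s(t))·Γ(s(t))⁻¹·B(s(t))ᵀ·R(s(t)))·x(t) for all t. Then the function V(t) := x(t)ᵀ·R(s(t))·x(t) is differentiable with V′(t) = −x(t)ᵀ·(Q(s(t)) + R(s(t))·B(s(t))·Γ(s(t))⁻¹·B(s(t))ᵀ·R(s(t)))·x(t) for all t. -/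
open Matrix

attribute [local instance] Matrix.normedAddCommGroup Matrix.normedSpace

lemma entry_hasDerivAt {n m : ℕ} {M : ℝ → Matrix (Fin n) (Fin m) ℝ}
    {M' : Matrix (Fin n) (Fin m) ℝ} {t : ℝ} (h : HasDerivAt M M' t) (i : Fin n) (j : Fin m) :
    HasDerivAt (fun τ => M τ i j) (M' i j) t :=
  hasDerivAt_pi.mp (hasDerivAt_pi.mp h i) j

lemma quad_hasDerivAt {n : ℕ} {u v : ℝ → Fin n → ℝ} {M : ℝ → Matrix (Fin n) (Fin n) ℝ}
    {u' v' : Fin n → ℝ} {M' : Matrix (Fin n) (Fin n) ℝ} {t : ℝ}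
    (hu : HasDerivAt u u' t) (hM : HasDerivAt M M' t) (hv : HasDerivAt v v' t) :
    HasDerivAt (fun τ => u τ ⬝ᵥ (M τ).mulVec (v τ))
      (u' ⬝ᵥ (M t).mulVec (v t) + u t ⬝ᵥ M'.mulVec (v t) + u t ⬝ᵥ (M t).mulVec v') t := by
  have key : HasDerivAt (fun τ => ∑ i, ∑ j, u τ i * (M τ i j * v τ j))
      (∑ i, ∑ j, (u' i * (M t i j * v t j)
        + u t i * (M' i j * v t j + M t i j * v' j))) t := by
    refine HasDerivAt.fun_sum fun i _ => HasDerivAt.fun_sum fun j _ => ?_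
    exact (hasDerivAt_pi.mp hu i).mul ((entry_hasDerivAt hM i j).mul (hasDerivAt_pi.mp hv j))
  convert key using 2 with τ
  · simp [dotProduct, mulVec, Finset.mul_sum]
  · simp only [dotProduct, mulVec, Finset.mul_sum, Finset.sum_add_distrib, mul_add]
    ring

lemma mulVec_dot {n : ℕ} (M : Matrix (Fin n) (Fin n) ℝ) (a b : Fin n → ℝ) :
    (M.mulVec a) ⬝ᵥ b = a ⬝ᵥ (Mᵀ.mulVec b) := by
  rw [dotProduct_comm, dotProduct_mulVec, dotProduct_comm, mulVec_transpose]

/-- Lyapunov decrease along the closed-loop LQR dynamics obtained from the periodic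
Riccati differential equation: if `ρ(x)·R′(x) + A(x)ᵀR(x) + R(x)A(x) + Q(x)
− R(x)B(x)Γ(x)⁻¹B(x)ᵀR(x) = 0`, `s′ = ρ(s)` and
`x′ = (A(s) − B(s)Γ(s)⁻¹B(s)ᵀR(s))·x`, then `V = xᵀR(s)x` satisfies
`V′ = −xᵀ(Q(s) + R(s)B(s)Γ(s)⁻¹B(s)ᵀR(s))x`. -/
theorem stmt18 {n m : ℕ}
    (ρ : ℝ → ℝ)
    (A Q : ℝ → Matrix (Fin n) (Fin n) ℝ)
    (B : ℝ → Matrix (Fin n) (Fin m) ℝ)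
    (Γ : ℝ → Matrix (Fin m) (Fin m) ℝ)
    (hΓsymm : ∀ x, (Γ x).IsSymm) (hΓinv : ∀ x, IsUnit (Γ x))
    (R : ℝ → Matrix (Fin n) (Fin n) ℝ)
    (hRdiff : Differentiable ℝ R) (hRsymm : ∀ x, (R x).IsSymm)
    (hRic : ∀ x, ρ x • deriv R x + (A x)ᵀ * R x + R x * A x + Q x
      - R x * B x * (Γ x)⁻¹ * (B x)ᵀ * R x = 0)
    (s : ℝ → ℝ) (hs : ∀ t, HasDerivAt s (ρ (s t)) t)
    (x : ℝ → Fin n → ℝ)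
    (hx : ∀ t, HasDerivAt x
      ((A (s t) - B (s t) * (Γ (s t))⁻¹ * (B (s t))ᵀ * R (s t)).mulVec (x t)) t) :
    ∀ t, HasDerivAt (fun τ => x τ ⬝ᵥ (R (s τ)).mulVec (x τ))
      (-(x t ⬝ᵥ ((Q (s t) + R (s t) * B (s t) * (Γ (s t))⁻¹ * (B (s t))ᵀ * R (s t)).mulVec
          (x t)))) t := by
  intro t
  have hRs : HasDerivAt (fun τ => R (s τ)) (ρ (s t) • deriv R (s t)) t :=
    ((hRdiff (s t)).hasDerivAt).scomp t (hs t)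
  have key := quad_hasDerivAt (hx t) hRs (hx t)
  convert key using 1
  set y := s t
  set K : Matrix (Fin n) (Fin n) ℝ := B y * (Γ y)⁻¹ * (B y)ᵀ * R y with hK
  have hG : ((Γ y)⁻¹)ᵀ = (Γ y)⁻¹ := by
    rw [transpose_nonsing_inv, (hΓsymm y).eq]
  have hKT : Kᵀ * R y = R y * B y * (Γ y)⁻¹ * (B y)ᵀ * R y := by
    simp only [hK, transpose_mul, transpose_transpose, hG, (hRsymm y).eq]
    simp only [Matrix.mul_assoc]
  have hric : ρ y • deriv R y
      = R y * B y * (Γ y)⁻¹ * (B y)ᵀ * R y - (A y)ᵀ * R y - R y * A y - Q y := by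
    have h := hRic y
    rw [sub_eq_zero] at h
    rw [← h]; abel
  have hRK : R y * K = R y * B y * (Γ y)⁻¹ * (B y)ᵀ * R y := by
    simp only [hK, Matrix.mul_assoc]
  have hmain : (A y - K)ᵀ * R y + ρ y • deriv R y + R y * (A y - K)
      = -(Q y + R y * B y * (Γ y)⁻¹ * (B y)ᵀ * R y) := by
    rw [transpose_sub, sub_mul, hKT, hric, mul_sub, hRK]
    abel
  rw [mulVec_dot, mulVec_mulVec, mulVec_mulVec, ← dotProduct_add, ← dotProduct_add,
    ← add_mulVec, ← add_mulVec, hmain, neg_mulVec, dotProduct_neg]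
end
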